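/- arXiv:1809.02177 — 5 statements merged into one kernel-verified Lean document; each statement's English description precedes it below -/
import Mathlib

section
/- For every integer $n \ge 2$, $\zeta(n) = \frac{1}{(n-1)!}\int_{-\infty}^{\infty}\big(\log(1+e^s)\big)^{n-1} - \big(\max(0,s)\big)^{n-1}\,ds$. -/
open MeasureTheory Real Set Filter Topology Asymptotics

lemma pow_sub_pow_le' (k : ℕ) {a b : ℝ} (hb : 0 ≤ b) (hba : b ≤ a) :
    a ^ (k+1) - b ^ (k+1) ≤ (k+1) * a ^ k * (a - b) := by
  induction k with
  | zero => simp
  | succ k ih =>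
    have ha : 0 ≤ a := hb.trans hba
    have h1 : a ^ (k+2) - b ^ (k+2) = a * (a ^ (k+1) - b ^ (k+1)) + (a - b) * b ^ (k+1) := by
      ring
    have h2 : a * (a ^ (k+1) - b ^ (k+1)) ≤ a * ((k+1) * a ^ k * (a - b)) :=
      mul_le_mul_of_nonneg_left ih ha
    have h3 : (a - b) * b ^ (k+1) ≤ (a - b) * a ^ (k+1) :=
      mul_le_mul_of_nonneg_left (pow_le_pow_left₀ hb hba _) (by linarith)
    calc a ^ (k+2) - b ^ (k+2) ≤ a * ((k+1) * a ^ k * (a - b)) + (a - b) * a ^ (k+1) := by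
          rw [h1]; linarith
      _ = ((k:ℝ)+1+1) * a ^ (k+1) * (a - b) := by ring
      _ = ((k+1:ℕ)+1) * a ^ (k+1) * (a - b) := by push_cast; ring


lemma hasDerivAt_maxpow (k : ℕ) (s : ℝ) :
    HasDerivAt (fun x : ℝ => (max 0 x) ^ (k+2)) (((k:ℝ)+2) * (max 0 s) ^ (k+1)) s := by
  rcases lt_trichotomy s 0 with h | h | h
  · have hev : (fun x : ℝ => (max 0 x) ^ (k+2)) =ᶠ[𝓝 s] fun _ => (0:ℝ) := by
      filter_upwards [Iio_mem_nhds h] with x hx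
      rw [max_eq_left (le_of_lt hx)]; simp
    have h0 : HasDerivAt (fun _ : ℝ => (0:ℝ)) 0 s := hasDerivAt_const s 0
    have h1 : (((k:ℝ)+2) * (max 0 s) ^ (k+1)) = 0 := by
      rw [max_eq_left h.le]; simp
    rw [h1]
    exact h0.congr_of_eventuallyEq hev
  · subst h
    rw [hasDerivAt_iff_isLittleO]
    have h1 : (fun x : ℝ => (max 0 x) ^ (k+2)) =O[𝓝 0] fun x => x ^ (k+2) := by
      apply IsBigO.of_bound 1
      filter_upwards with x
      simp only [one_mul, norm_pow, Real.norm_eq_abs]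
      have hx : |max 0 x| ≤ |x| := by
        rcases le_or_gt x 0 with h | h
        · rw [max_eq_left h]; simp
        · rw [max_eq_right h.le]
      exact pow_le_pow_left₀ (abs_nonneg _) hx _
    have h2 : (fun x : ℝ => x ^ (k+2)) =o[𝓝 0] fun x => x ^ 1 :=
      isLittleO_pow_pow (by omega)
    have h3 := h1.trans_isLittleO h2
    apply h3.congr' _ _
    · filter_upwards with x
      simp
    · filter_upwards with x
      simp
  · have hev : (fun x : ℝ => (max 0 x) ^ (k+2)) =ᶠ[𝓝 s] fun x => x ^ (k+2) := by
      filter_upwards [Ioi_mem_nhds h] with x hx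
      rw [max_eq_right (le_of_lt hx)]
    have h1 : (((k:ℝ)+2) * (max 0 s) ^ (k+1)) = ((k+2:ℕ):ℝ) * s ^ (k+2-1) := by
      rw [max_eq_right h.le]; push_cast; ring
    rw [h1]
    exact (hasDerivAt_pow (k+2) s).congr_of_eventuallyEq hev


lemma g_le_f (s : ℝ) : max 0 s ≤ Real.log (1 + Real.exp s) := by
  have h1 : (0:ℝ) < 1 + Real.exp s := by positivity
  apply max_le
  · apply Real.log_nonneg; nlinarith [Real.exp_pos s]
  · calc s = Real.log (Real.exp s) := (Real.log_exp s).symm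
      _ ≤ _ := Real.log_le_log (Real.exp_pos s) (by linarith)

lemma f_le (s : ℝ) : Real.log (1 + Real.exp s) ≤ 1 + |s| := by
  have h2 : 1 + Real.exp s ≤ 2 * Real.exp (max 0 s) := by
    have e1 : Real.exp s ≤ Real.exp (max 0 s) := Real.exp_le_exp.2 (le_max_right _ _)
    have e2 : (1:ℝ) ≤ Real.exp (max 0 s) := Real.one_le_exp (le_max_left _ _)
    linarith
  calc Real.log (1 + Real.exp s) ≤ Real.log (2 * Real.exp (max 0 s)) :=
        Real.log_le_log (by positivity) h2
    _ = Real.log 2 + max 0 s := by rw [Real.log_mul (by norm_num) (Real.exp_ne_zero _), Real.log_exp]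
    _ ≤ 1 + |s| := by
        have : Real.log 2 ≤ 1 := by
          calc Real.log 2 ≤ 2 - 1 := Real.log_le_sub_one_of_pos (by norm_num)
            _ = 1 := by norm_num
        have : max 0 s ≤ |s| := max_le (abs_nonneg s) (le_abs_self s)
        linarith [Real.log_le_sub_one_of_pos (show (0:ℝ) < 2 by norm_num)]

lemma f_sub_g (s : ℝ) : Real.log (1 + Real.exp s) - max 0 s ≤ Real.exp (-|s|) := by
  rcases le_or_gt s 0 with h | h
  · rw [max_eq_left h, abs_of_nonpos h, neg_neg, sub_zero]
    have := Real.log_le_sub_one_of_pos (show (0:ℝ) < 1 + Real.exp s by positivity)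
    linarith
  · rw [max_eq_right h.le, abs_of_pos h]
    have key : 1 + Real.exp s ≤ Real.exp (s + Real.exp (-s)) := by
      rw [Real.exp_add]
      have := Real.add_one_le_exp (Real.exp (-s))
      have h3 : Real.exp s * Real.exp (-s) = 1 := by rw [← Real.exp_add]; simp
      nlinarith [mul_le_mul_of_nonneg_left this (Real.exp_pos s).le]
    have := Real.log_le_log (show (0:ℝ) < 1 + Real.exp s by positivity) key
    rw [Real.log_exp] at this
    linarith

lemma integrable_psi (m : ℕ) : Integrable (fun s : ℝ => (1 + |s|) ^ m * Real.exp (-|s|)) := by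
  have hIoi : IntegrableOn (fun s : ℝ => (1 + s) ^ m * Real.exp (-s)) (Ioi 0) := by
    apply integrable_of_isBigO_exp_neg (b := 1/2) one_half_pos
    · fun_prop
    · have h1 : (fun x : ℝ => (1 + x) ^ m) =o[atTop] fun x => Real.exp ((1/2) * x) := by
        have base : (fun y : ℝ => y ^ m) =o[atTop] fun y => Real.exp ((1/2) * y) :=
          isLittleO_pow_exp_pos_mul_atTop m one_half_pos
        have comp := base.comp_tendsto (tendsto_atTop_add_const_left atTop 1 tendsto_id)
        simp only [Function.comp_def] at comp
        calc (fun x : ℝ => (1 + x) ^ m) =o[atTop] fun x => Real.exp ((1/2) * (1 + x)) := comp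
          _ =O[atTop] fun x => Real.exp ((1/2) * x) := by
            apply IsBigO.of_bound (Real.exp (1/2))
            filter_upwards with x
            rw [Real.norm_eq_abs, Real.norm_eq_abs, abs_of_pos (Real.exp_pos _),
              abs_of_pos (Real.exp_pos _), mul_add, Real.exp_add, mul_one]
      have h2 : (fun x : ℝ => (1 + x) ^ m * Real.exp (-x)) =O[atTop]
          fun x => Real.exp ((1/2) * x) * Real.exp (-x) :=
        h1.isBigO.mul (isBigO_refl _ _)
      have h3 : (fun x : ℝ => Real.exp ((1/2)*x) * Real.exp (-x))
          = fun x => Real.exp (-(1/2) * x) := by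
        funext x; rw [← Real.exp_add]; congr 1; ring
      rw [← h3]
      exact h2
  have hIoi' : IntegrableOn (fun s : ℝ => (1 + |s|) ^ m * Real.exp (-|s|)) (Ioi 0) := by
    apply hIoi.congr_fun _ measurableSet_Ioi
    intro x hx
    show (1 + x) ^ m * Real.exp (-x) = (1 + |x|) ^ m * Real.exp (-|x|)
    rw [abs_of_pos hx]
  have hIic : IntegrableOn (fun s : ℝ => (1 + |s|) ^ m * Real.exp (-|s|)) (Iic 0) := by
    rw [← Measure.map_neg_eq_self (volume : Measure ℝ)]
    have mne : MeasurableEmbedding fun x : ℝ => -x := (Homeomorph.neg ℝ).measurableEmbedding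
    rw [mne.integrableOn_map_iff]
    simp only [Function.comp_def, abs_neg, neg_preimage, neg_Iic, neg_zero]
    exact Iff.mpr integrableOn_Ici_iff_integrableOn_Ioi hIoi'
  have := hIic.union hIoi'
  rwa [Iic_union_Ioi, integrableOn_univ] at this


lemma g_nonneg (s : ℝ) : (0:ℝ) ≤ max 0 s := le_max_left _ _
lemma f_nonneg (s : ℝ) : (0:ℝ) ≤ Real.log (1 + Real.exp s) := (g_nonneg s).trans (g_le_f s)
lemma one_add_exp_pos (s : ℝ) : (0:ℝ) < 1 + Real.exp s := by positivity

lemma base_le (s : ℝ) : (1:ℝ) ≤ 1 + |s| := by simp [abs_nonneg]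

lemma integrable_h1 (k : ℕ) :
    Integrable (fun s : ℝ => (Real.log (1 + Real.exp s)) ^ (k+1) - (max 0 s) ^ (k+1)) := by
  apply Integrable.mono' ((integrable_psi (k+1)).const_mul ((k:ℝ)+1))
  · apply Continuous.aestronglyMeasurable
    fun_prop (disch := intro s; positivity)
  · filter_upwards with s
    set F := Real.log (1 + Real.exp s) with hF
    set G := max 0 s with hG
    have h0 : G ^ (k+1) ≤ F ^ (k+1) := pow_le_pow_left₀ (g_nonneg s) (g_le_f s) _
    rw [Real.norm_eq_abs, abs_of_nonneg (by linarith)]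
    have h1 : F ^ (k+1) - G ^ (k+1) ≤ (k+1) * F ^ k * (F - G) :=
      pow_sub_pow_le' k (g_nonneg s) (g_le_f s)
    have h2 : F ^ k ≤ (1 + |s|) ^ k := pow_le_pow_left₀ (f_nonneg s) (f_le s) _
    have h3 : F - G ≤ Real.exp (-|s|) := f_sub_g s
    have h4 : (0:ℝ) ≤ F - G := by linarith [g_le_f s]
    calc F ^ (k+1) - G ^ (k+1) ≤ (k+1) * F ^ k * (F - G) := h1
      _ ≤ (k+1) * (1 + |s|) ^ k * Real.exp (-|s|) := by
          apply mul_le_mul _ h3 h4 (by positivity)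
          apply mul_le_mul_of_nonneg_left h2 (by positivity)
      _ ≤ ((k:ℝ)+1) * ((1 + |s|) ^ (k+1) * Real.exp (-|s|)) := by
          rw [← mul_assoc]
          apply mul_le_mul_of_nonneg_right _ (Real.exp_nonneg _)
          apply mul_le_mul_of_nonneg_left _ (by positivity)
          exact pow_le_pow_right₀ (base_le s) (by omega)

lemma integrable_h2 (k : ℕ) :
    Integrable (fun s : ℝ => (Real.log (1 + Real.exp s)) ^ (k+1) / (1 + Real.exp s)) := by
  apply Integrable.mono' (integrable_psi (k+1))
  · apply Continuous.aestronglyMeasurable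
    fun_prop (disch := intro s; positivity)
  · filter_upwards with s
    set F := Real.log (1 + Real.exp s) with hF
    have hFpos := f_nonneg s
    have hepos := one_add_exp_pos s
    rw [Real.norm_eq_abs, abs_of_nonneg (by positivity)]
    rcases le_or_gt 0 s with h | h
    · have h1 : F ^ (k+1) ≤ (1 + |s|) ^ (k+1) := pow_le_pow_left₀ hFpos (f_le s) _
      have h2 : 1 / (1 + Real.exp s) ≤ Real.exp (-|s|) := by
        rw [abs_of_nonneg h, div_le_iff₀ hepos, Real.exp_neg]
        rw [inv_mul_eq_div, le_div_iff₀ (Real.exp_pos s)]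
        nlinarith [Real.exp_pos s]
      calc F ^ (k+1) / (1 + Real.exp s) = F ^ (k+1) * (1 / (1 + Real.exp s)) := by ring
        _ ≤ (1 + |s|) ^ (k+1) * Real.exp (-|s|) := by
            apply mul_le_mul h1 h2 (by positivity) (by positivity)
    · have hFle : F ≤ Real.exp s := by
        have := Real.log_le_sub_one_of_pos hepos
        simpa using this
      have hF1 : F ≤ 1 := hFle.trans (by nlinarith [Real.exp_lt_one_iff.2 h])
      have h1 : F ^ (k+1) ≤ F := by
        calc F ^ (k+1) = F ^ k * F := by ring
          _ ≤ 1 * F := mul_le_mul_of_nonneg_right (pow_le_one₀ hFpos hF1) hFpos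
          _ = F := one_mul F
      have h2 : F ^ (k+1) / (1 + Real.exp s) ≤ F := by
        apply (div_le_iff₀ hepos).2
        nlinarith [pow_nonneg hFpos (k+1), Real.exp_pos s]
      calc F ^ (k+1) / (1 + Real.exp s) ≤ F := h2
        _ ≤ Real.exp (-|s|) := by
            rw [abs_of_neg h, neg_neg]; exact hFle
        _ ≤ (1 + |s|) ^ (k+1) * Real.exp (-|s|) := by
            have hb : (1:ℝ) ≤ (1 + |s|) ^ (k+1) := one_le_pow₀ (base_le s)
            nlinarith [Real.exp_pos (-|s|)]


lemma integral_D_eq_zero (k : ℕ) :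
    ∫ s : ℝ, ((Real.log (1 + Real.exp s)) ^ (k+1) - (max 0 s) ^ (k+1)
      - (Real.log (1 + Real.exp s)) ^ (k+1) / (1 + Real.exp s)) = 0 := by
  set Φ : ℝ → ℝ := fun s => (Real.log (1 + Real.exp s)) ^ (k+2) - (max 0 s) ^ (k+2) with hΦ
  set FD : ℝ → ℝ := fun s => ((k:ℝ)+2) * ((Real.log (1 + Real.exp s)) ^ (k+1) - (max 0 s) ^ (k+1)
      - (Real.log (1 + Real.exp s)) ^ (k+1) / (1 + Real.exp s)) with hFD
  have hderiv : ∀ s : ℝ, HasDerivAt Φ (FD s) s := by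
    intro s
    have hpos := one_add_exp_pos s
    have hf : HasDerivAt (fun x : ℝ => Real.log (1 + Real.exp x))
        (Real.exp s / (1 + Real.exp s)) s :=
      ((Real.hasDerivAt_exp s).const_add 1).log hpos.ne'
    have hfp := hf.pow (k+2)
    have hgp := hasDerivAt_maxpow k s
    have := hfp.sub hgp
    convert this using 1
    case e'_4 => rfl
    case e'_5 => rfl
    case e'_8 => rfl
    have hk1 : (k+2 : ℕ) - 1 = k + 1 := rfl
    rw [hk1]
    have he : Real.exp s / (1 + Real.exp s) = 1 - 1 / (1 + Real.exp s) := by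
      field_simp
      ring
    rw [he]
    push_cast
    ring
  have hFDint : Integrable FD := ((integrable_h1 k).sub (integrable_h2 k)).const_mul _
  -- limit at -∞
  have hbot : Tendsto Φ atBot (𝓝 0) := by
    have t1 : Tendsto (fun s : ℝ => Real.log (1 + Real.exp s)) atBot (𝓝 0) := by
      have : Tendsto (fun s : ℝ => 1 + Real.exp s) atBot (𝓝 1) := by
        simpa using (Real.tendsto_exp_atBot.const_add 1)
      simpa using this.log one_ne_zero
    have t2 : Tendsto (fun s : ℝ => (Real.log (1 + Real.exp s)) ^ (k+2)) atBot (𝓝 0) := by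
      simpa using t1.pow (k+2)
    have t3 : Tendsto (fun s : ℝ => (max 0 s) ^ (k+2)) atBot (𝓝 0) := by
      apply Tendsto.congr' _ tendsto_const_nhds
      filter_upwards [eventually_lt_atBot (0:ℝ)] with s hs
      rw [max_eq_left hs.le]
      simp
    simpa using t2.sub t3
  -- limit at +∞
  have htop : Tendsto Φ atTop (𝓝 0) := by
    have hb : Tendsto (fun s : ℝ => ((k:ℝ)+2) * Real.exp 1 *
        ((1+s) ^ (k+1) * Real.exp (-(1+s)))) atTop (𝓝 0) := by
      have base := tendsto_pow_mul_exp_neg_atTop_nhds_zero (k+1)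
      have comp := base.comp (tendsto_atTop_add_const_left atTop 1 tendsto_id)
      simp only [Function.comp_def, id_eq] at comp
      simpa using (comp.const_mul (((k:ℝ)+2) * Real.exp 1))
    apply tendsto_of_tendsto_of_tendsto_of_le_of_le' tendsto_const_nhds hb
    · filter_upwards with s
      have := pow_le_pow_left₀ (g_nonneg s) (g_le_f s) (k+2)
      simp only [hΦ]
      linarith [pow_le_pow_left₀ (g_nonneg s) (g_le_f s) (k+2)]
    · filter_upwards [eventually_ge_atTop (0:ℝ)] with s hs
      have h1 : Φ s ≤ ((k+1:ℕ)+1) * (Real.log (1 + Real.exp s)) ^ (k+1) *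
          (Real.log (1 + Real.exp s) - max 0 s) :=
        pow_sub_pow_le' (k+1) (g_nonneg s) (g_le_f s)
      have h2 : (Real.log (1 + Real.exp s)) ^ (k+1) ≤ (1+s) ^ (k+1) := by
        have := f_le s
        rw [abs_of_nonneg hs] at this
        exact pow_le_pow_left₀ (f_nonneg s) this _
      have h3 : Real.log (1 + Real.exp s) - max 0 s ≤ Real.exp (-(1+s)) * Real.exp 1 := by
        have := f_sub_g s
        rw [abs_of_nonneg hs] at this
        rw [← Real.exp_add]
        simpa using this
      have h4 : (0:ℝ) ≤ Real.log (1 + Real.exp s) - max 0 s := by linarith [g_le_f s]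
      calc Φ s ≤ ((k+1:ℕ)+1) * (Real.log (1 + Real.exp s)) ^ (k+1) *
          (Real.log (1 + Real.exp s) - max 0 s) := h1
        _ ≤ ((k+1:ℕ)+1) * (1+s) ^ (k+1) * (Real.exp (-(1+s)) * Real.exp 1) := by
            apply mul_le_mul _ h3 h4 (by positivity)
            apply mul_le_mul_of_nonneg_left h2 (by positivity)
        _ = ((k:ℝ)+2) * Real.exp 1 * ((1+s) ^ (k+1) * Real.exp (-(1+s))) := by
            push_cast; ring
  -- FTC on both halves
  have hIic : ∫ s in Iic (0:ℝ), FD s = Φ 0 - 0 :=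
    integral_Iic_of_hasDerivAt_of_tendsto' (fun x _ => hderiv x) hFDint.integrableOn hbot
  have hIoi : ∫ s in Ioi (0:ℝ), FD s = 0 - Φ 0 :=
    integral_Ioi_of_hasDerivAt_of_tendsto' (fun x _ => hderiv x) hFDint.integrableOn htop
  have htot : ∫ s : ℝ, FD s = 0 := by
    rw [← intervalIntegral.integral_Iic_add_Ioi hFDint.integrableOn hFDint.integrableOn, hIic, hIoi]
    ring
  have : ((k:ℝ)+2) * ∫ s : ℝ, ((Real.log (1 + Real.exp s)) ^ (k+1) - (max 0 s) ^ (k+1)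
      - (Real.log (1 + Real.exp s)) ^ (k+1) / (1 + Real.exp s)) = 0 := by
    rw [← integral_const_mul]
    exact htot
  have hk : ((k:ℝ)+2) ≠ 0 := by positivity
  exact (mul_eq_zero.mp this).resolve_left hk


lemma change_var (k : ℕ) :
    ∫ s : ℝ, (Real.log (1 + Real.exp s)) ^ (k+1) / (1 + Real.exp s)
      = ∫ u in Ioi (0:ℝ), u ^ (k+1) / (Real.exp u - 1) := by
  have hf' : ∀ x ∈ (univ : Set ℝ), HasDerivWithinAt (fun x : ℝ => Real.log (1 + Real.exp x))
      (Real.exp x / (1 + Real.exp x)) univ x := by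
    intro x _
    exact (((Real.hasDerivAt_exp x).const_add 1).log (one_add_exp_pos x).ne').hasDerivWithinAt
  have hinj : InjOn (fun x : ℝ => Real.log (1 + Real.exp x)) univ := by
    intro x _ y _ hxy
    simp only at hxy
    have hx : Real.exp (Real.log (1 + Real.exp x)) = 1 + Real.exp x :=
      Real.exp_log (one_add_exp_pos x)
    have hy : Real.exp (Real.log (1 + Real.exp y)) = 1 + Real.exp y :=
      Real.exp_log (one_add_exp_pos y)
    have : (1:ℝ) + Real.exp x = 1 + Real.exp y := by rw [← hx, ← hy, hxy]
    exact Real.exp_injective (by linarith)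
  have himg : (fun x : ℝ => Real.log (1 + Real.exp x)) '' univ = Ioi 0 := by
    ext u
    simp only [image_univ, mem_range, mem_Ioi]
    constructor
    · rintro ⟨x, rfl⟩
      apply Real.log_pos
      simp [Real.exp_pos]
    · intro hu
      have h1 : (0:ℝ) < Real.exp u - 1 := by
        have : (1:ℝ) < Real.exp u := by
          calc (1:ℝ) = Real.exp 0 := Real.exp_zero.symm
            _ < Real.exp u := Real.exp_lt_exp.2 hu
        linarith
      refine ⟨Real.log (Real.exp u - 1), ?_⟩
      rw [Real.exp_log h1]
      rw [show (1:ℝ) + (Real.exp u - 1) = Real.exp u by ring, Real.log_exp]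
  have key := integral_image_eq_integral_abs_deriv_smul MeasurableSet.univ hf' hinj
    (fun u => u ^ (k+1) / (Real.exp u - 1))
  rw [himg] at key
  rw [key, setIntegral_univ]
  apply integral_congr_ae
  filter_upwards with x
  have hpos := one_add_exp_pos x
  have hlog : Real.exp (Real.log (1 + Real.exp x)) = 1 + Real.exp x := Real.exp_log hpos
  simp only [smul_eq_mul]
  rw [abs_of_pos (by positivity : (0:ℝ) < Real.exp x / (1 + Real.exp x)), hlog]
  rw [show (1:ℝ) + Real.exp x - 1 = Real.exp x by ring]
  field_simp


lemma series_eq (k : ℕ) :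
    ∫ u in Ioi (0:ℝ), u ^ (k+1) / (Real.exp u - 1)
      = ((k+1).factorial : ℝ) * ∑' j : ℕ, 1 / ((j:ℝ)+1) ^ (k+2) := by
  set F : ℕ → ℝ → ℝ := fun j u => u ^ (k+1) * Real.exp (-(((j:ℝ)+1) * u)) with hFdef
  -- integrability of each term
  have hint : ∀ j : ℕ, IntegrableOn (F j) (Ioi 0) := by
    intro j
    have h0 : (-1:ℝ) < ((k:ℝ)+1) := by
      have : (0:ℝ) ≤ (k:ℝ) := Nat.cast_nonneg k
      linarith
    have hb : (0:ℝ) < (j:ℝ)+1 := by positivity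
    have := integrableOn_rpow_mul_exp_neg_mul_rpow h0 zero_lt_one hb
    apply this.congr_fun _ measurableSet_Ioi
    intro x hx
    show x ^ ((k:ℝ)+1) * Real.exp (-((j:ℝ)+1) * x ^ (1:ℝ)) = x ^ (k+1) * Real.exp (-(((j:ℝ)+1) * x))
    rw [Real.rpow_one, show ((k:ℝ)+1) = ((k+1:ℕ):ℝ) by push_cast; ring, Real.rpow_natCast,
      neg_mul]
  -- value of each integral
  have hval : ∀ j : ℕ, ∫ u in Ioi (0:ℝ), F j u = ((k+1).factorial : ℝ) / ((j:ℝ)+1) ^ (k+2) := by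
    intro j
    have ha : (0:ℝ) < (k:ℝ)+2 := by positivity
    have hr : (0:ℝ) < (j:ℝ)+1 := by positivity
    have key := integral_rpow_mul_exp_neg_mul_Ioi ha hr
    have hcongr : ∫ t in Ioi (0:ℝ), t ^ ((k:ℝ)+2-1) * Real.exp (-(((j:ℝ)+1) * t))
        = ∫ u in Ioi (0:ℝ), F j u := by
      apply setIntegral_congr_fun measurableSet_Ioi
      intro x hx
      show x ^ ((k:ℝ)+2-1) * Real.exp (-(((j:ℝ)+1) * x)) = x ^ (k+1) * Real.exp (-(((j:ℝ)+1) * x))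
      rw [show ((k:ℝ)+2-1) = ((k+1:ℕ):ℝ) by push_cast; ring, Real.rpow_natCast]
    rw [hcongr] at key
    rw [key]
    rw [show ((k:ℝ)+2) = ((k+1:ℕ):ℝ)+1 by push_cast; ring, Real.Gamma_nat_eq_factorial]
    rw [show (((k+1:ℕ):ℝ)+1) = ((k+2:ℕ):ℝ) by push_cast; ring, Real.rpow_natCast]
    rw [div_pow, one_pow]
    rw [div_mul_eq_mul_div, one_mul]
  -- summability of the norms
  have hsum0 : Summable (fun j : ℕ => ((k+1).factorial : ℝ) / ((j:ℝ)+1) ^ (k+2)) := by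
    have base : Summable (fun j : ℕ => 1 / ((j:ℝ)) ^ (k+2)) :=
      Real.summable_one_div_nat_pow.mpr (by omega)
    have shifted : Summable (fun j : ℕ => 1 / (((j+1:ℕ)):ℝ) ^ (k+2)) :=
      (summable_nat_add_iff (f := fun j : ℕ => 1 / ((j:ℝ)) ^ (k+2)) 1).mpr base
    have shifted' : Summable (fun j : ℕ => 1 / ((j:ℝ)+1) ^ (k+2)) := by
      apply shifted.congr
      intro j; push_cast; ring
    simpa [div_eq_mul_inv, mul_comm] using shifted'.mul_left ((k+1).factorial : ℝ)
  have hnorm : Summable (fun j : ℕ => ∫ u in Ioi (0:ℝ), ‖F j u‖) := by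
    apply hsum0.congr
    intro j
    rw [← hval j]
    apply setIntegral_congr_fun measurableSet_Ioi
    intro x hx
    have hx0 : (0:ℝ) < x := hx
    have h : ‖x ^ (k+1) * Real.exp (-(((j:ℝ)+1) * x))‖ = x ^ (k+1) * Real.exp (-(((j:ℝ)+1) * x)) := by
      rw [Real.norm_eq_abs, abs_of_nonneg (by positivity)]
    exact h.symm
  -- swap sum and integral
  have hswap := integral_tsum_of_summable_integral_norm (μ := volume.restrict (Ioi 0))
    (fun j => hint j) hnorm
  -- pointwise tsum
  have hpt : ∀ u ∈ Ioi (0:ℝ), ∑' j : ℕ, F j u = u ^ (k+1) / (Real.exp u - 1) := by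
    intro u hu
    have hu0 : (0:ℝ) < u := hu
    set r : ℝ := Real.exp (-u) with hrdef
    have hr0 : (0:ℝ) ≤ r := (Real.exp_pos _).le
    have hr1 : r < 1 := by
      rw [hrdef, Real.exp_lt_one_iff]
      linarith
    have hterm : ∀ j : ℕ, F j u = (u ^ (k+1) * r) * r ^ j := by
      intro j
      show u ^ (k+1) * Real.exp (-(((j:ℝ)+1) * u)) = (u ^ (k+1) * r) * r ^ j
      rw [show (-(((j:ℝ)+1) * u)) = ((j+1:ℕ):ℝ) * (-u) by push_cast; ring,
        Real.exp_nat_mul, ← hrdef, pow_succ]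
      ring
    rw [tsum_congr hterm, tsum_mul_left, tsum_geometric_of_lt_one hr0 hr1]
    have heu : Real.exp u ≠ 0 := Real.exp_ne_zero u
    have he1 : Real.exp u - 1 ≠ 0 := by
      have : (1:ℝ) < Real.exp u := by
        calc (1:ℝ) = Real.exp 0 := Real.exp_zero.symm
          _ < Real.exp u := Real.exp_lt_exp.2 hu0
      linarith
    have hr1' : (1:ℝ) - r ≠ 0 := by linarith
    rw [hrdef, Real.exp_neg]
    have h2 : (1 - (Real.exp u)⁻¹) = (Real.exp u - 1) / Real.exp u := by
      field_simp
    rw [h2]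
    field_simp
  -- conclude
  have hR : ∫ u in Ioi (0:ℝ), (∑' j : ℕ, F j u) = ∫ u in Ioi (0:ℝ), u ^ (k+1) / (Real.exp u - 1) :=
    setIntegral_congr_fun measurableSet_Ioi hpt
  rw [← hR, ← hswap]
  rw [tsum_congr hval]
  have : (fun j : ℕ => ((k+1).factorial : ℝ) / ((j:ℝ)+1) ^ (k+2))
      = fun j : ℕ => ((k+1).factorial : ℝ) * (1 / ((j:ℝ)+1) ^ (k+2)) := by
    funext j; ring
  rw [this, tsum_mul_left]


theorem stmt6 (n : ℕ) (hn : 2 ≤ n) :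
    (∑' k : ℕ, 1 / ((k : ℝ) + 1) ^ n)
      = (1 / ((n - 1).factorial : ℝ)) *
          ∫ s : ℝ, (Real.log (1 + Real.exp s)) ^ (n - 1) - (max 0 s) ^ (n - 1) := by
  obtain ⟨k, rfl⟩ : ∃ k, n = k + 2 := ⟨n - 2, by omega⟩
  simp only [show k + 2 - 1 = k + 1 from rfl]
  have key : (∫ s : ℝ, (Real.log (1 + Real.exp s)) ^ (k+1) - (max 0 s) ^ (k+1))
      = ((k+1).factorial : ℝ) * ∑' j : ℕ, 1 / ((j:ℝ)+1) ^ (k+2) := by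
    have h1 := integrable_h1 k
    have h2 := integrable_h2 k
    have hzero := integral_D_eq_zero k
    have hsplit : (fun s : ℝ => (Real.log (1 + Real.exp s)) ^ (k+1) - (max 0 s) ^ (k+1))
        = fun s => ((Real.log (1 + Real.exp s)) ^ (k+1) - (max 0 s) ^ (k+1)
            - (Real.log (1 + Real.exp s)) ^ (k+1) / (1 + Real.exp s))
          + (Real.log (1 + Real.exp s)) ^ (k+1) / (1 + Real.exp s) := by
      funext s; ring
    have hD : Integrable (fun s : ℝ => (Real.log (1 + Real.exp s)) ^ (k+1) - (max 0 s) ^ (k+1)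
        - (Real.log (1 + Real.exp s)) ^ (k+1) / (1 + Real.exp s)) := by
      exact h1.sub h2
    rw [hsplit, integral_add hD h2, hzero, zero_add, change_var, series_eq]
  rw [key]
  have hfac : (((k+1).factorial : ℝ)) ≠ 0 := Nat.cast_ne_zero.mpr (Nat.factorial_ne_zero _)
  rw [one_div, inv_mul_cancel_left₀ hfac]
end

section
/- $\zeta(3) = \frac{1}{2}\int_{-\infty}^{\infty}\big(\log(1+e^s)\big)^2 - \big(\max(0,s)\big)^2\,ds$. -/
open MeasureTheory Real Set
open scoped ENNReal NNReal

noncomputable def S : ℝ := ∑' k : ℕ, 1 / ((k : ℝ) + 1) ^ 3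

lemma summable_shift (p : ℕ) (hp : 2 ≤ p) : Summable (fun k : ℕ => 1 / ((k : ℝ) + 1) ^ p) := by
  have h := (Real.summable_one_div_nat_pow (p := p)).mpr hp
  have := (summable_nat_add_iff 1).mpr h
  simpa using this

lemma odd_term (j : ℕ) : 1 / ((2*j+1 : ℕ) + 1 : ℝ) ^ 3 = (1/8) * (1 / ((j:ℝ)+1)^3) := by
  push_cast
  rw [show ((2:ℝ)*j+1+1) = 2*(j+1) by ring, mul_pow]
  have : ((j:ℝ)+1)^3 ≠ 0 := by positivity
  field_simp; ring

lemma summable_even : Summable (fun j : ℕ => 1 / ((2*j : ℕ) + 1 : ℝ) ^ 3) := by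
  refine Summable.of_nonneg_of_le (fun j => by positivity) (fun j => ?_) (summable_shift 3 (by norm_num))
  have h : ((j:ℝ)+1) ≤ ((2*j : ℕ):ℝ)+1 := by push_cast; linarith
  exact one_div_le_one_div_of_le (by positivity) (pow_le_pow_left₀ (by positivity) h 3)

lemma summable_odd : Summable (fun j : ℕ => 1 / ((2*j+1 : ℕ) + 1 : ℝ) ^ 3) := by
  simp_rw [odd_term]; exact (summable_shift 3 (by norm_num)).mul_left _

lemma sum_odd : ∑' j : ℕ, 1 / ((2*j+1 : ℕ) + 1 : ℝ) ^ 3 = (1/8) * S := by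
  simp_rw [odd_term]; exact tsum_mul_left

lemma eta3 : ∑' k : ℕ, (-1 : ℝ)^k / ((k : ℝ) + 1) ^ 3 = (3/4) * S := by
  set f : ℕ → ℝ := fun k => (-1 : ℝ)^k / ((k : ℝ) + 1) ^ 3 with hf
  have he : Summable (fun j : ℕ => f (2*j)) := by
    have : (fun j : ℕ => f (2*j)) = fun j : ℕ => 1 / ((2*j : ℕ) + 1 : ℝ) ^ 3 := by
      funext j; simp [hf, pow_mul]
    rw [this]; exact summable_even
  have ho : Summable (fun j : ℕ => f (2*j+1)) := by
    have : (fun j : ℕ => f (2*j+1)) = fun j : ℕ => -(1 / ((2*j+1 : ℕ) + 1 : ℝ) ^ 3) := by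
      funext j; simp [hf, pow_add, pow_mul, neg_div]
    rw [this]; exact summable_odd.neg
  have key := tsum_even_add_odd he ho
  have hS : (∑' j : ℕ, 1 / ((2*j : ℕ) + 1 : ℝ) ^ 3) + ∑' j : ℕ, 1 / ((2*j+1 : ℕ) + 1 : ℝ) ^ 3 = S := by
    have := tsum_even_add_odd (f := fun k : ℕ => 1 / ((k : ℝ) + 1) ^ 3) summable_even summable_odd
    rw [S]; convert this using 2
  have h1 : (∑' j : ℕ, f (2*j)) = ∑' j : ℕ, 1 / ((2*j : ℕ) + 1 : ℝ) ^ 3 := by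
    congr 1; funext j; simp [hf, pow_mul]
  have h2 : (∑' j : ℕ, f (2*j+1)) = -((1/8) * S) := by
    rw [show (∑' j : ℕ, f (2*j+1)) = ∑' j : ℕ, -(1 / ((2*j+1 : ℕ) + 1 : ℝ) ^ 3) by
      congr 1; funext j; simp [hf, pow_add, pow_mul, neg_div], tsum_neg, sum_odd]
  rw [h1, h2] at key
  linarith [hS, sum_odd, key]

-- change of variables x = exp(-s) : Ioi 0 → Ioo 0 1
lemma image_exp_neg : (fun s : ℝ => exp (-s)) '' Ioi 0 = Ioo 0 1 := by
  ext y; constructor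
  · rintro ⟨s, hs, rfl⟩
    exact ⟨exp_pos _, by rw [exp_lt_one_iff]; simpa using hs⟩
  · rintro ⟨h0, h1⟩
    exact ⟨-log y, by simpa using Real.log_neg h0 h1, by simp [Real.exp_log h0]⟩

lemma hasDeriv_exp_neg (s : ℝ) : HasDerivAt (fun s : ℝ => exp (-s)) (-exp (-s)) s := by
  have h := (Real.hasDerivAt_exp (-s)).comp s (hasDerivAt_neg s)
  rw [mul_neg_one] at h
  exact h

lemma injOn_exp_neg : InjOn (fun s : ℝ => exp (-s)) (Ioi 0) := fun a _ b _ h => by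
  simpa using Real.exp_injective h

lemma cov_exp (g : ℝ → ℝ) :
    ∫ x in Ioo (0:ℝ) 1, g x = ∫ s in Ioi (0:ℝ), exp (-s) * g (exp (-s)) := by
  rw [← image_exp_neg,
    integral_image_eq_integral_abs_deriv_smul measurableSet_Ioi
      (fun s _ => (hasDeriv_exp_neg s).hasDerivWithinAt) injOn_exp_neg g]
  refine setIntegral_congr_fun measurableSet_Ioi (fun s _ => ?_)
  simp [abs_of_nonneg (exp_pos (-s)).le]

lemma cov_exp_int (g : ℝ → ℝ) :
    IntegrableOn g (Ioo (0:ℝ) 1) ↔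
      IntegrableOn (fun s => exp (-s) * g (exp (-s))) (Ioi (0:ℝ)) := by
  rw [← image_exp_neg,
    integrableOn_image_iff_integrableOn_abs_deriv_smul measurableSet_Ioi
      (fun s _ => (hasDeriv_exp_neg s).hasDerivWithinAt) injOn_exp_neg g]
  constructor <;> intro h <;> refine h.congr_fun (fun s _ => ?_) measurableSet_Ioi <;>
    simp [abs_of_nonneg (exp_pos (-s)).le]

lemma gamma3 : Real.Gamma 3 = 2 := by
  rw [show (3:ℝ) = ((2:ℕ):ℝ) + 1 by norm_num, Real.Gamma_nat_eq_factorial]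
  norm_num

lemma gamma2 : Real.Gamma 2 = 1 := by
  rw [show (2:ℝ) = ((1:ℕ):ℝ) + 1 by norm_num, Real.Gamma_nat_eq_factorial]
  norm_num

-- ∫_{Ioi 0} s^2 exp(-(b s)) = 2/b^3
lemma rpow_two_eq (y : ℝ) : y ^ (2:ℝ) = y ^ (2:ℕ) := by
  rw [show (2:ℝ) = ((2:ℕ):ℝ) by norm_num, Real.rpow_natCast]

lemma int_sq_exp {b : ℝ} (hb : 0 < b) :
    IntegrableOn (fun s : ℝ => s ^ 2 * exp (-(b * s))) (Ioi 0) ∧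
      ∫ s in Ioi (0:ℝ), s ^ 2 * exp (-(b * s)) = 2 / b ^ 3 := by
  constructor
  · have h := integrableOn_rpow_mul_exp_neg_mul_rpow (p := 1) (s := 2) (b := b)
      (by norm_num) one_pos hb
    refine h.congr_fun (fun s hs => ?_) measurableSet_Ioi
    simp only [Real.rpow_one, rpow_two_eq, neg_mul]
  · have h := Real.integral_rpow_mul_exp_neg_mul_Ioi (a := 3) (r := b) (by norm_num) hb
    rw [show (3:ℝ) - 1 = 2 by norm_num] at h
    rw [show (∫ s in Ioi (0:ℝ), s ^ 2 * exp (-(b * s)))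
        = ∫ s in Ioi (0:ℝ), s ^ (2:ℝ) * exp (-(b * s)) from
      setIntegral_congr_fun measurableSet_Ioi (fun s hs => by rw [rpow_two_eq]), h, gamma3]
    rw [div_rpow (by norm_num) hb.le, one_rpow]
    rw [show (3:ℝ) = ((3:ℕ):ℝ) by norm_num, Real.rpow_natCast]
    field_simp

lemma int_lin_exp {b : ℝ} (hb : 0 < b) :
    IntegrableOn (fun s : ℝ => s * exp (-(b * s))) (Ioi 0) ∧
      ∫ s in Ioi (0:ℝ), s * exp (-(b * s)) = 1 / b ^ 2 := by
  constructor
  · have h := integrableOn_rpow_mul_exp_neg_mul_rpow (p := 1) (s := 1) (b := b)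
      (by norm_num) one_pos hb
    refine h.congr_fun (fun s hs => ?_) measurableSet_Ioi
    simp only [Real.rpow_one, neg_mul]
  · have h := Real.integral_rpow_mul_exp_neg_mul_Ioi (a := 2) (r := b) (by norm_num) hb
    rw [show (2:ℝ) - 1 = 1 by norm_num] at h
    rw [show (∫ s in Ioi (0:ℝ), s * exp (-(b * s)))
        = ∫ s in Ioi (0:ℝ), s ^ (1:ℝ) * exp (-(b * s)) from
      setIntegral_congr_fun measurableSet_Ioi (fun s hs => by rw [Real.rpow_one]), h, gamma2]
    rw [div_rpow (by norm_num) hb.le, one_rpow, rpow_two_eq]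
    field_simp

lemma one_sub_hasDeriv (x : ℝ) : HasDerivAt (fun x : ℝ => 1 - x) (-1) x := by
  simpa using (hasDerivAt_id x).const_sub 1

lemma injOn_one_sub : InjOn (fun x : ℝ => 1 - x) (Ioo (0:ℝ) 1) :=
  fun a _ b _ h => by have h' : 1 - a = 1 - b := h; linarith

lemma image_one_sub : (fun x : ℝ => 1 - x) '' Ioo 0 1 = Ioo (0:ℝ) 1 := by
  ext y; constructor
  · rintro ⟨x, ⟨h0, h1⟩, rfl⟩
    show 1 - x ∈ Ioo (0:ℝ) 1
    exact ⟨by linarith, by linarith⟩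
  · rintro ⟨h0, h1⟩; exact ⟨1 - y, ⟨by linarith, by linarith⟩, by show 1 - (1 - y) = y; ring⟩

lemma cov_one_sub (g : ℝ → ℝ) :
    ∫ x in Ioo (0:ℝ) 1, g x = ∫ x in Ioo (0:ℝ) 1, g (1 - x) := by
  conv_lhs => rw [← image_one_sub]
  rw [integral_image_eq_integral_abs_deriv_smul measurableSet_Ioo
    (fun x _ => (one_sub_hasDeriv x).hasDerivWithinAt) injOn_one_sub g]
  refine setIntegral_congr_fun measurableSet_Ioo (fun x _ => ?_)
  simp

lemma cov_one_sub_int (g : ℝ → ℝ) :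
    IntegrableOn g (Ioo (0:ℝ) 1) ↔ IntegrableOn (fun x => g (1 - x)) (Ioo (0:ℝ) 1) := by
  conv_lhs => rw [← image_one_sub]
  rw [integrableOn_image_iff_integrableOn_abs_deriv_smul measurableSet_Ioo
    (fun x _ => (one_sub_hasDeriv x).hasDerivWithinAt) injOn_one_sub g]
  constructor <;> intro h <;> refine h.congr_fun (fun x _ => ?_) measurableSet_Ioo <;> simp

-- x ↦ x^2 on Ioo 0 1
lemma sq_hasDeriv (x : ℝ) : HasDerivAt (fun x : ℝ => x ^ 2) (2 * x) x := by
  simpa using hasDerivAt_pow 2 x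

lemma image_sq : (fun x : ℝ => x ^ 2) '' Ioo 0 1 = Ioo (0:ℝ) 1 := by
  ext y; constructor
  · rintro ⟨x, ⟨h0, h1⟩, rfl⟩
    show x ^ 2 ∈ Ioo (0:ℝ) 1
    exact ⟨by positivity, by nlinarith⟩
  · rintro ⟨h0, h1⟩
    refine ⟨Real.sqrt y, ⟨Real.sqrt_pos.mpr h0, ?_⟩, Real.sq_sqrt h0.le⟩
    nlinarith [Real.sq_sqrt h0.le, Real.sqrt_nonneg y]

lemma injOn_sq : InjOn (fun x : ℝ => x ^ 2) (Ioo 0 1) := by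
  rintro a ⟨ha0, _⟩ b ⟨hb0, _⟩ h
  have h' : a ^ 2 = b ^ 2 := h
  nlinarith

lemma cov_sq (g : ℝ → ℝ) :
    ∫ x in Ioo (0:ℝ) 1, g x = ∫ x in Ioo (0:ℝ) 1, |2 * x| * g (x ^ 2) := by
  conv_lhs => rw [← image_sq]
  rw [integral_image_eq_integral_abs_deriv_smul measurableSet_Ioo
    (fun x _ => (sq_hasDeriv x).hasDerivWithinAt) injOn_sq g]
  exact setIntegral_congr_fun measurableSet_Ioo (fun x _ => by simp)

lemma cov_sq_int (g : ℝ → ℝ) :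
    IntegrableOn g (Ioo (0:ℝ) 1) ↔
      IntegrableOn (fun x => |2 * x| * g (x ^ 2)) (Ioo (0:ℝ) 1) := by
  conv_lhs => rw [← image_sq]
  rw [integrableOn_image_iff_integrableOn_abs_deriv_smul measurableSet_Ioo
    (fun x _ => (sq_hasDeriv x).hasDerivWithinAt) injOn_sq g]
  constructor <;> intro h <;> refine h.congr_fun (fun x _ => ?_) measurableSet_Ioo <;> simp

-- Möbius x ↦ (1 - x)/(1 + x) on Ioo 0 1
lemma mob_hasDeriv (x : ℝ) (hx : x ∈ Ioo (0:ℝ) 1) :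
    HasDerivAt (fun x : ℝ => (1 - x) / (1 + x)) (-2 / (1 + x) ^ 2) x := by
  have hne : (1:ℝ) + x ≠ 0 := by have := hx.1; positivity
  have h : HasDerivAt (fun x : ℝ => (1 - x) / (1 + x)) ((-1 * (1 + x) - (1 - x) * 1) / (1 + x) ^ 2) x :=
    ((one_sub_hasDeriv x)).div ((hasDerivAt_id x).const_add 1) hne
  convert h using 1
  ring

lemma image_mob : (fun x : ℝ => (1 - x) / (1 + x)) '' Ioo 0 1 = Ioo (0:ℝ) 1 := by
  ext y; constructor
  · rintro ⟨x, ⟨h0, h1⟩, rfl⟩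
    show (1 - x) / (1 + x) ∈ Ioo (0:ℝ) 1
    have hne : (0:ℝ) < 1 + x := by linarith
    constructor
    · exact div_pos (by linarith) hne
    · rw [div_lt_one hne]; linarith
  · rintro ⟨h0, h1⟩
    have hne : (0:ℝ) < 1 + y := by linarith
    refine ⟨(1 - y) / (1 + y), ⟨div_pos (by linarith) hne, ?_⟩, ?_⟩
    · rw [div_lt_one hne]; linarith
    · show (1 - (1 - y) / (1 + y)) / (1 + (1 - y) / (1 + y)) = y
      rw [div_eq_iff]
      · field_simp
        ring
      · intro hc
        have hpos : (0:ℝ) < (1 - y) / (1 + y) := div_pos (by linarith) hne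
        linarith

lemma injOn_mob : InjOn (fun x : ℝ => (1 - x) / (1 + x)) (Ioo 0 1) := by
  rintro a ⟨ha0, _⟩ b ⟨hb0, _⟩ h
  have h' : (1 - a) / (1 + a) = (1 - b) / (1 + b) := h
  rw [div_eq_div_iff (by linarith) (by linarith)] at h'
  nlinarith

lemma cov_mob (g : ℝ → ℝ) :
    ∫ x in Ioo (0:ℝ) 1, g x
      = ∫ x in Ioo (0:ℝ) 1, |(-2:ℝ) / (1 + x) ^ 2| * g ((1 - x) / (1 + x)) := by
  conv_lhs => rw [← image_mob]
  rw [integral_image_eq_integral_abs_deriv_smul measurableSet_Ioo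
    (fun x hx => (mob_hasDeriv x hx).hasDerivWithinAt) injOn_mob g]
  exact setIntegral_congr_fun measurableSet_Ioo (fun x _ => by simp)

lemma cov_mob_int (g : ℝ → ℝ) :
    IntegrableOn g (Ioo (0:ℝ) 1) ↔
      IntegrableOn (fun x => |(-2:ℝ) / (1 + x) ^ 2| * g ((1 - x) / (1 + x))) (Ioo (0:ℝ) 1) := by
  conv_lhs => rw [← image_mob]
  rw [integrableOn_image_iff_integrableOn_abs_deriv_smul measurableSet_Ioo
    (fun x hx => (mob_hasDeriv x hx).hasDerivWithinAt) injOn_mob g]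
  constructor <;> intro h <;> refine h.congr_fun (fun x _ => ?_) measurableSet_Ioo <;> simp

-- s ↦ -s maps Ioi 0 to Iio 0
lemma image_neg' : (fun s : ℝ => -s) '' Ioi 0 = Iio (0:ℝ) := by
  ext y; constructor
  · rintro ⟨s, hs, rfl⟩
    show -s ∈ Iio (0:ℝ)
    simpa using hs
  · intro hy; exact ⟨-y, by simpa using hy, by show - -y = y; ring⟩

lemma cov_neg (g : ℝ → ℝ) :
    ∫ s in Iio (0:ℝ), g s = ∫ s in Ioi (0:ℝ), g (-s) := by
  conv_lhs => rw [← image_neg']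
  rw [integral_image_eq_integral_abs_deriv_smul measurableSet_Ioi
    (fun s _ => (hasDerivAt_neg s).hasDerivWithinAt)
    (fun a _ b _ h => by have h' : -a = -b := h; linarith) g]
  exact setIntegral_congr_fun measurableSet_Ioi (fun s _ => by simp)

lemma cov_neg_int (g : ℝ → ℝ) :
    IntegrableOn g (Iio (0:ℝ)) ↔ IntegrableOn (fun s => g (-s)) (Ioi (0:ℝ)) := by
  conv_lhs => rw [← image_neg']
  rw [integrableOn_image_iff_integrableOn_abs_deriv_smul measurableSet_Ioi
    (fun s _ => (hasDerivAt_neg s).hasDerivWithinAt)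
    (fun a _ b _ h => by have h' : -a = -b := h; linarith) g]
  constructor <;> intro h <;> refine h.congr_fun (fun x _ => ?_) measurableSet_Ioi <;> simp

lemma mob_mob {y : ℝ} (h0 : 0 < y) (h1 : y < 1) :
    (1 - (1 - y) / (1 + y)) / (1 + (1 - y) / (1 + y)) = y := by
  have hne : (0:ℝ) < 1 + y := by linarith
  rw [div_eq_iff]
  · field_simp
    ring
  · intro hc
    have hpos : (0:ℝ) < (1 - y) / (1 + y) := div_pos (by linarith) hne
    linarith

lemma int_pow_log_sq (k : ℕ) :
    IntegrableOn (fun x : ℝ => x ^ k * log x ^ 2) (Ioo 0 1) ∧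
      ∫ x in Ioo (0:ℝ) 1, x ^ k * log x ^ 2 = 2 / ((k:ℝ) + 1) ^ 3 := by
  have hb : (0:ℝ) < (k:ℝ) + 1 := by positivity
  have he : (fun s : ℝ => exp (-s) * (exp (-s) ^ k * log (exp (-s)) ^ 2))
      = fun s : ℝ => s ^ 2 * exp (-(((k:ℝ) + 1) * s)) := by
    funext s
    rw [Real.log_exp, ← Real.exp_nat_mul]
    have h1 : rexp (-s) * rexp ((k:ℝ) * -s) = rexp (-(((k:ℝ) + 1) * s)) := by
      rw [← Real.exp_add]; congr 1; ring
    linear_combination s ^ 2 * h1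
  constructor
  · rw [cov_exp_int]
    refine ((int_sq_exp hb).1).congr_fun (fun s _ => ?_) measurableSet_Ioi
    exact (congrFun he s).symm
  · rw [cov_exp (fun x : ℝ => x ^ k * log x ^ 2)]
    calc ∫ s in Ioi (0:ℝ), exp (-s) * (exp (-s) ^ k * log (exp (-s)) ^ 2)
        = ∫ s in Ioi (0:ℝ), s ^ 2 * exp (-(((k:ℝ) + 1) * s)) := by rw [he]
      _ = 2 / ((k:ℝ) + 1) ^ 3 := (int_sq_exp hb).2

lemma int_pow_neg_log (k : ℕ) :
    IntegrableOn (fun x : ℝ => x ^ k * (-log x)) (Ioo 0 1) ∧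
      ∫ x in Ioo (0:ℝ) 1, x ^ k * (-log x) = 1 / ((k:ℝ) + 1) ^ 2 := by
  have hb : (0:ℝ) < (k:ℝ) + 1 := by positivity
  have he : (fun s : ℝ => exp (-s) * (exp (-s) ^ k * (-log (exp (-s)))))
      = fun s : ℝ => s * exp (-(((k:ℝ) + 1) * s)) := by
    funext s
    rw [Real.log_exp, ← Real.exp_nat_mul]
    have h1 : rexp (-s) * rexp ((k:ℝ) * -s) = rexp (-(((k:ℝ) + 1) * s)) := by
      rw [← Real.exp_add]; congr 1; ring
    linear_combination s * h1
  constructor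
  · rw [cov_exp_int]
    refine ((int_lin_exp hb).1).congr_fun (fun s _ => ?_) measurableSet_Ioi
    exact (congrFun he s).symm
  · rw [cov_exp (fun x : ℝ => x ^ k * (-log x))]
    calc ∫ s in Ioi (0:ℝ), exp (-s) * (exp (-s) ^ k * (-log (exp (-s))))
        = ∫ s in Ioi (0:ℝ), s * exp (-(((k:ℝ) + 1) * s)) := by rw [he]
      _ = 1 / ((k:ℝ) + 1) ^ 2 := (int_lin_exp hb).2

-- integrable tsum helper
lemma integrable_of_tsum {μ : Measure ℝ} {F : ℕ → ℝ → ℝ} {g : ℝ → ℝ}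
    (hgm : AEStronglyMeasurable g μ)
    (hg : ∀ᵐ a ∂μ, g a = ∑' i, F i a)
    (hF_int : ∀ i, Integrable (F i) μ)
    (hF_sum : Summable fun i => ∫ a, ‖F i a‖ ∂μ) : Integrable g μ := by
  refine ⟨hgm, ?_⟩
  show (∫⁻ a, (‖g a‖₊ : ENNReal) ∂μ) < ⊤
  calc ∫⁻ a, ‖g a‖₊ ∂μ = ∫⁻ a, ‖∑' i, F i a‖₊ ∂μ := by
        refine lintegral_congr_ae (hg.mono fun a ha => ?_); simp only [ha]
    _ ≤ ∫⁻ a, ∑' i, (‖F i a‖₊ : ENNReal) ∂μ := by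
        refine lintegral_mono fun a => ?_
        by_cases h : Summable fun i => F i a
        · have h' : Summable fun i => ‖F i a‖₊ := by
            rw [← NNReal.summable_coe]
            simpa [coe_nnnorm] using h.abs
          calc (‖∑' i, F i a‖₊ : ℝ≥0∞) ≤ ((∑' i, ‖F i a‖₊ : NNReal) : ENNReal) := by
                exact_mod_cast nnnorm_tsum_le h'
            _ = ∑' i, (‖F i a‖₊ : ENNReal) := ENNReal.coe_tsum h'
        · rw [tsum_eq_zero_of_not_summable h]
          simp
    _ = ∑' i, ∫⁻ a, ‖F i a‖₊ ∂μ := lintegral_tsum fun i => (hF_int i).1.aemeasurable.nnnorm.coe_nnreal_ennreal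
    _ = ∑' i, ENNReal.ofReal (∫ a, ‖F i a‖ ∂μ) := by
        congr 1; funext i
        exact (MeasureTheory.ofReal_integral_norm_eq_lintegral_enorm (hF_int i)).symm
    _ = ENNReal.ofReal (∑' i, ∫ a, ‖F i a‖ ∂μ) := by
        rw [ENNReal.ofReal_tsum_of_nonneg (fun i => integral_nonneg fun a => norm_nonneg _) hF_sum]
    _ < ⊤ := ENNReal.ofReal_lt_top

lemma series_eval {F : ℕ → ℝ → ℝ} {g : ℝ → ℝ} {c : ℕ → ℝ}
    (hgm : AEStronglyMeasurable g (volume.restrict (Ioo 0 1)))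
    (hpt : ∀ x ∈ Ioo (0:ℝ) 1, g x = ∑' i, F i x)
    (hF_int : ∀ i, IntegrableOn (F i) (Ioo 0 1))
    (hnorm : ∀ i, (∫ a in Ioo (0:ℝ) 1, ‖F i a‖) = c i)
    (hc : Summable c) :
    IntegrableOn g (Ioo 0 1) ∧
      ∫ a in Ioo (0:ℝ) 1, g a = ∑' i, ∫ a in Ioo (0:ℝ) 1, F i a := by
  have hg_ae : ∀ᵐ a ∂(volume.restrict (Ioo 0 1)), g a = ∑' i, F i a :=
    (ae_restrict_iff' measurableSet_Ioo).mpr (ae_of_all _ hpt)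
  have hF_sum : Summable fun i => ∫ a, ‖F i a‖ ∂(volume.restrict (Ioo 0 1)) := by
    have : (fun i => ∫ a, ‖F i a‖ ∂(volume.restrict (Ioo 0 1))) = c := funext hnorm
    rw [this]; exact hc
  refine ⟨integrable_of_tsum hgm hg_ae hF_int hF_sum, ?_⟩
  rw [integral_congr_ae hg_ae]
  exact (integral_tsum_of_summable_integral_norm hF_int hF_sum).symm

lemma nonneg_on_unit {i : ℕ} {x : ℝ} (hx : x ∈ Ioo (0:ℝ) 1) : (0:ℝ) ≤ x ^ i * log x ^ 2 := by
  have := hx.1; positivity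

lemma T1 : IntegrableOn (fun x : ℝ => log x ^ 2 / (1 - x)) (Ioo 0 1) ∧
    ∫ x in Ioo (0:ℝ) 1, log x ^ 2 / (1 - x) = 2 * S := by
  have h := series_eval (F := fun i x => x ^ i * log x ^ 2)
    (g := fun x => log x ^ 2 / (1 - x)) (c := fun i => 2 / ((i:ℝ) + 1) ^ 3)
    (((Real.measurable_log.pow_const 2).div (measurable_const.sub measurable_id)).aestronglyMeasurable)
    (fun x hx => by
      show log x ^ 2 / (1 - x) = _
      rw [tsum_mul_right, tsum_geometric_of_lt_one hx.1.le hx.2]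
      rw [div_eq_mul_inv, mul_comm])
    (fun i => (int_pow_log_sq i).1)
    (fun i => by
      rw [setIntegral_congr_fun measurableSet_Ioo
        (fun x hx => by rw [Real.norm_of_nonneg (nonneg_on_unit hx)])]
      exact (int_pow_log_sq i).2)
    (by simpa [div_eq_mul_inv] using (summable_shift 3 (by norm_num)).mul_left 2)
  refine ⟨h.1, ?_⟩
  rw [h.2]
  calc (∑' i : ℕ, ∫ a in Ioo (0:ℝ) 1, a ^ i * log a ^ 2)
      = ∑' i : ℕ, 2 * (1 / ((i:ℝ) + 1) ^ 3) := by
        congr 1; funext i; rw [(int_pow_log_sq i).2]; ring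
    _ = 2 * S := tsum_mul_left

lemma one_add_neg_pow_nonneg (i : ℕ) : (0:ℝ) ≤ 1 + (-1) ^ i := by
  rcases Nat.even_or_odd i with h | h
  · rw [h.neg_one_pow]; norm_num
  · rw [h.neg_one_pow]; norm_num

lemma T4series : IntegrableOn (fun x : ℝ => 2 * log x ^ 2 / ((1 - x) * (1 + x))) (Ioo 0 1) ∧
    ∫ x in Ioo (0:ℝ) 1, 2 * log x ^ 2 / ((1 - x) * (1 + x)) = (7/2) * S := by
  have h := series_eval (F := fun i x => (1 + (-1:ℝ) ^ i) * (x ^ i * log x ^ 2))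
    (g := fun x => 2 * log x ^ 2 / ((1 - x) * (1 + x)))
    (c := fun i => (1 + (-1:ℝ) ^ i) * (2 / ((i:ℝ) + 1) ^ 3))
    (((measurable_const.mul (Real.measurable_log.pow_const 2)).div ((measurable_const.sub measurable_id).mul (measurable_const.add measurable_id))).aestronglyMeasurable)
    (fun x hx => by
      show 2 * log x ^ 2 / ((1 - x) * (1 + x)) = _
      obtain ⟨hx0, hx1⟩ := hx
      have habs : |x| < 1 := by rw [abs_of_pos hx0]; exact hx1
      have h1 : HasSum (fun i : ℕ => x ^ i * log x ^ 2) ((1 - x)⁻¹ * log x ^ 2) :=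
        (hasSum_geometric_of_lt_one hx0.le hx1).mul_right _
      have h2 : HasSum (fun i : ℕ => (-x) ^ i * log x ^ 2) ((1 - -x)⁻¹ * log x ^ 2) :=
        (hasSum_geometric_of_norm_lt_one (ξ := -x) (by rwa [norm_neg, Real.norm_eq_abs])).mul_right _
      have h3 := h1.add h2
      have he : (fun i : ℕ => x ^ i * log x ^ 2 + (-x) ^ i * log x ^ 2)
          = fun i : ℕ => (1 + (-1:ℝ) ^ i) * (x ^ i * log x ^ 2) := by
        funext i; rw [neg_pow]; ring
      rw [he] at h3
      rw [h3.tsum_eq]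
      have hne1 : (1:ℝ) - x ≠ 0 := by linarith
      have hne2 : (1:ℝ) + x ≠ 0 := by linarith
      rw [sub_neg_eq_add]
      field_simp
      ring)
    (fun i => ((int_pow_log_sq i).1.const_mul _))
    (fun i => by
      rw [setIntegral_congr_fun measurableSet_Ioo (fun x hx => by
        rw [Real.norm_of_nonneg (mul_nonneg (one_add_neg_pow_nonneg i) (nonneg_on_unit hx))]),
        integral_const_mul, (int_pow_log_sq i).2])
    (by
      have h1 : Summable (fun i : ℕ => 2 / ((i:ℝ) + 1) ^ 3) := by
        simpa [div_eq_mul_inv] using (summable_shift 3 (by norm_num)).mul_left 2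
      have h2 : Summable (fun i : ℕ => (-1:ℝ) ^ i * (2 / ((i:ℝ) + 1) ^ 3)) := by
        refine Summable.of_abs ?_
        refine h1.congr fun i => ?_
        rw [abs_mul, abs_pow, abs_neg, abs_one, one_pow, one_mul,
          abs_of_nonneg (by positivity)]
      refine (h1.add h2).congr fun i => ?_
      ring)
  refine ⟨h.1, ?_⟩
  rw [h.2]
  have hval : ∀ i : ℕ, (∫ a in Ioo (0:ℝ) 1, (1 + (-1:ℝ) ^ i) * (a ^ i * log a ^ 2))
      = 2 * (1 / ((i:ℝ) + 1) ^ 3) + 2 * ((-1:ℝ) ^ i / ((i:ℝ) + 1) ^ 3) := by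
    intro i
    rw [integral_const_mul, (int_pow_log_sq i).2]
    ring
  rw [tsum_congr hval]
  rw [Summable.tsum_add (by simpa [div_eq_mul_inv] using (summable_shift 3 (by norm_num)).mul_left 2)
    (by
      refine Summable.mul_left 2 ?_
      refine Summable.of_abs ?_
      refine (summable_shift 3 (by norm_num)).congr fun i => ?_
      rw [abs_div, abs_pow, abs_neg, abs_one, one_pow, abs_of_nonneg (by positivity)])]
  rw [tsum_mul_left, tsum_mul_left, eta3]
  have hSS : (∑' i : ℕ, 1 / ((i:ℝ) + 1) ^ 3) = S := rfl
  rw [hSS]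
  ring

lemma TA : IntegrableOn (fun x : ℝ => log (1 + x) * (-log x) / x) (Ioo 0 1) ∧
    ∫ x in Ioo (0:ℝ) 1, log (1 + x) * (-log x) / x = (3/4) * S := by
  have h := series_eval (F := fun i x => ((-1:ℝ) ^ i / ((i:ℝ) + 1)) * (x ^ i * (-log x)))
    (g := fun x => log (1 + x) * (-log x) / x)
    (c := fun i => (1 / ((i:ℝ) + 1)) * (1 / ((i:ℝ) + 1) ^ 2))
    ((((measurable_const.add measurable_id).log.mul Real.measurable_log.neg).div
      measurable_id).aestronglyMeasurable)
    (fun x hx => by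
      show log (1 + x) * (-log x) / x = _
      obtain ⟨hx0, hx1⟩ := hx
      have hxne : x ≠ 0 := ne_of_gt hx0
      have habs : |(-x)| < 1 := by rw [abs_neg, abs_of_pos hx0]; exact hx1
      have h1 := (Real.hasSum_pow_div_log_of_abs_lt_one habs).neg
      rw [sub_neg_eq_add] at h1
      have h2 := h1.mul_right ((-log x) / x)
      have he : (fun n : ℕ => -((-x) ^ (n + 1) / ((n:ℝ) + 1)) * ((-log x) / x))
          = fun n : ℕ => ((-1:ℝ) ^ n / ((n:ℝ) + 1)) * (x ^ n * (-log x)) := by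
        funext n
        have hn : ((n:ℝ) + 1) ≠ 0 := by positivity
        rw [neg_pow x]
        field_simp
        ring
      rw [he] at h2
      rw [h2.tsum_eq]
      ring)
    (fun i => ((int_pow_neg_log i).1.const_mul _))
    (fun i => by
      have key : ∀ x ∈ Ioo (0:ℝ) 1,
          ‖((-1:ℝ) ^ i / ((i:ℝ) + 1)) * (x ^ i * (-log x))‖
            = (1 / ((i:ℝ) + 1)) * (x ^ i * (-log x)) := by
        intro x hx
        obtain ⟨hx0, hx1⟩ := hx
        have hlog : 0 ≤ -log x := by
          have := Real.log_neg hx0 hx1; linarith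
        rw [norm_mul, Real.norm_of_nonneg (by positivity : (0:ℝ) ≤ x ^ i * (-log x))]
        congr 1
        rw [Real.norm_eq_abs, abs_div, abs_pow, abs_neg, abs_one, one_pow,
          abs_of_nonneg (by positivity : (0:ℝ) ≤ (i:ℝ) + 1)]
      rw [setIntegral_congr_fun measurableSet_Ioo key, integral_const_mul,
        (int_pow_neg_log i).2])
    (by
      have : (fun i : ℕ => (1 / ((i:ℝ) + 1)) * (1 / ((i:ℝ) + 1) ^ 2))
          = fun i : ℕ => 1 / ((i:ℝ) + 1) ^ 3 := by
        funext i
        have : ((i:ℝ) + 1) ≠ 0 := by positivity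
        field_simp
      rw [this]; exact summable_shift 3 (by norm_num))
  refine ⟨h.1, ?_⟩
  rw [h.2]
  have hval : ∀ i : ℕ, (∫ a in Ioo (0:ℝ) 1, ((-1:ℝ) ^ i / ((i:ℝ) + 1)) * (a ^ i * (-log a)))
      = (-1:ℝ) ^ i / ((i:ℝ) + 1) ^ 3 := by
    intro i
    rw [integral_const_mul, (int_pow_neg_log i).2]
    have : ((i:ℝ) + 1) ≠ 0 := by positivity
    field_simp
  rw [tsum_congr hval, eta3]

lemma L1 : IntegrableOn (fun x : ℝ => log (1 - x) ^ 2 / x) (Ioo 0 1) ∧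
    ∫ x in Ioo (0:ℝ) 1, log (1 - x) ^ 2 / x = 2 * S := by
  have hEq : EqOn (fun x : ℝ => (fun x : ℝ => log x ^ 2 / (1 - x)) (1 - x))
      (fun x : ℝ => log (1 - x) ^ 2 / x) (Ioo (0:ℝ) 1) := by
    intro x _
    show log (1 - x) ^ 2 / (1 - (1 - x)) = log (1 - x) ^ 2 / x
    rw [sub_sub_cancel]
  constructor
  · exact ((cov_one_sub_int (fun x : ℝ => log x ^ 2 / (1 - x))).mp T1.1).congr_fun hEq
      measurableSet_Ioo
  · calc ∫ x in Ioo (0:ℝ) 1, log (1 - x) ^ 2 / x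
        = ∫ x in Ioo (0:ℝ) 1, (fun x : ℝ => log x ^ 2 / (1 - x)) (1 - x) :=
          (setIntegral_congr_fun measurableSet_Ioo hEq).symm
      _ = ∫ x in Ioo (0:ℝ) 1, log x ^ 2 / (1 - x) := (cov_one_sub (fun x : ℝ => log x ^ 2 / (1 - x))).symm
      _ = 2 * S := T1.2

lemma L3 : IntegrableOn (fun x : ℝ => log (1 - x ^ 2) ^ 2 / x) (Ioo 0 1) ∧
    ∫ x in Ioo (0:ℝ) 1, log (1 - x ^ 2) ^ 2 / x = S := by
  set f : ℝ → ℝ := fun t => (1/2) * (log (1 - t) ^ 2 / t) with hf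
  have hEq : EqOn (fun x : ℝ => |2 * x| * f (x ^ 2))
      (fun x : ℝ => log (1 - x ^ 2) ^ 2 / x) (Ioo (0:ℝ) 1) := by
    intro x hx
    have hx0 := hx.1
    show |2 * x| * ((1/2) * (log (1 - x ^ 2) ^ 2 / x ^ 2)) = log (1 - x ^ 2) ^ 2 / x
    rw [abs_of_pos (by linarith)]
    field_simp
  have hfi : IntegrableOn f (Ioo (0:ℝ) 1) := L1.1.const_mul _
  constructor
  · exact ((cov_sq_int f).mp hfi).congr_fun hEq measurableSet_Ioo
  · calc ∫ x in Ioo (0:ℝ) 1, log (1 - x ^ 2) ^ 2 / x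
        = ∫ x in Ioo (0:ℝ) 1, |2 * x| * f (x ^ 2) :=
          (setIntegral_congr_fun measurableSet_Ioo hEq).symm
      _ = ∫ x in Ioo (0:ℝ) 1, f x := (cov_sq f).symm
      _ = (1/2) * (2 * S) := by rw [hf]; rw [integral_const_mul, L1.2]
      _ = S := by ring

lemma L4 : IntegrableOn (fun x : ℝ => log ((1 - x) / (1 + x)) ^ 2 / x) (Ioo 0 1) ∧
    ∫ x in Ioo (0:ℝ) 1, log ((1 - x) / (1 + x)) ^ 2 / x = (7/2) * S := by
  set h4 : ℝ → ℝ := fun x => log ((1 - x) / (1 + x)) ^ 2 / x with hh4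
  have hEq : EqOn (fun x : ℝ => 2 * log x ^ 2 / ((1 - x) * (1 + x)))
      (fun x : ℝ => |(-2:ℝ) / (1 + x) ^ 2| * h4 ((1 - x) / (1 + x))) (Ioo (0:ℝ) 1) := by
    intro x ⟨hx0, hx1⟩
    have h1p : (0:ℝ) < 1 + x := by linarith
    have h1m : (0:ℝ) < 1 - x := by linarith
    show 2 * log x ^ 2 / ((1 - x) * (1 + x))
      = |(-2:ℝ) / (1 + x) ^ 2| * (log ((1 - (1 - x) / (1 + x)) / (1 + (1 - x) / (1 + x))) ^ 2
          / ((1 - x) / (1 + x)))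
    rw [mob_mob hx0 hx1]
    rw [abs_div, abs_neg, abs_of_nonneg (by norm_num : (0:ℝ) ≤ (2:ℝ)),
      abs_of_nonneg (by positivity : (0:ℝ) ≤ (1 + x) ^ 2)]
    field_simp
  constructor
  · refine (cov_mob_int h4).mpr ?_
    exact T4series.1.congr_fun hEq measurableSet_Ioo
  · calc ∫ x in Ioo (0:ℝ) 1, h4 x
        = ∫ x in Ioo (0:ℝ) 1, |(-2:ℝ) / (1 + x) ^ 2| * h4 ((1 - x) / (1 + x)) := cov_mob h4
      _ = ∫ x in Ioo (0:ℝ) 1, 2 * log x ^ 2 / ((1 - x) * (1 + x)) :=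
          (setIntegral_congr_fun measurableSet_Ioo hEq).symm
      _ = (7/2) * S := T4series.2

lemma Jlem : IntegrableOn (fun x : ℝ => log (1 + x) ^ 2 / x) (Ioo 0 1) ∧
    ∫ x in Ioo (0:ℝ) 1, log (1 + x) ^ 2 / x = (1/4) * S := by
  have hJm : AEStronglyMeasurable (fun x : ℝ => log (1 + x) ^ 2 / x)
      (volume.restrict (Ioo (0:ℝ) 1)) :=
    (((measurable_const.add measurable_id).log.pow_const 2).div measurable_id).aestronglyMeasurable
  have hbound : ∀ x ∈ Ioo (0:ℝ) 1, log (1 + x) ^ 2 ≤ log (1 - x) ^ 2 := by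
    intro x ⟨hx0, hx1⟩
    have ha : 0 ≤ log (1 + x) := log_nonneg (by linarith)
    have hb : log (1 + x) + log (1 - x) ≤ 0 := by
      rw [← Real.log_mul (by positivity) (by intro h; nlinarith)]
      exact Real.log_nonpos (by nlinarith) (by nlinarith)
    have hc : log (1 + x) ≤ -log (1 - x) := by linarith
    calc log (1 + x) ^ 2 ≤ (-log (1 - x)) ^ 2 := by
          exact pow_le_pow_left₀ ha hc 2
      _ = log (1 - x) ^ 2 := by ring
  have hJ_int : IntegrableOn (fun x : ℝ => log (1 + x) ^ 2 / x) (Ioo 0 1) := by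
    refine L1.1.mono' hJm ?_
    refine (ae_restrict_iff' measurableSet_Ioo).mpr (ae_of_all _ fun x hx => ?_)
    have hx0 := hx.1
    rw [Real.norm_of_nonneg (by positivity)]
    exact (div_le_div_iff_of_pos_right hx0).mpr (hbound x hx)
  refine ⟨hJ_int, ?_⟩
  have key : EqOn (fun x : ℝ => 2 * (log (1 + x) ^ 2 / x) + 2 * (log (1 - x) ^ 2 / x))
      (fun x : ℝ => log (1 - x ^ 2) ^ 2 / x + log ((1 - x) / (1 + x)) ^ 2 / x)
      (Ioo (0:ℝ) 1) := by
    intro x ⟨hx0, hx1⟩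
    have h1p : (1:ℝ) + x ≠ 0 := by positivity
    have h1m : (1:ℝ) - x ≠ 0 := by intro h; linarith
    show 2 * (log (1 + x) ^ 2 / x) + 2 * (log (1 - x) ^ 2 / x)
      = log (1 - x ^ 2) ^ 2 / x + log ((1 - x) / (1 + x)) ^ 2 / x
    rw [show (1:ℝ) - x ^ 2 = (1 + x) * (1 - x) by ring, Real.log_mul h1p h1m,
      Real.log_div h1m h1p]
    have hxne : x ≠ 0 := ne_of_gt hx0
    field_simp
    ring
  have e1 : (∫ x in Ioo (0:ℝ) 1, (2 * (log (1 + x) ^ 2 / x) + 2 * (log (1 - x) ^ 2 / x)))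
      = ∫ x in Ioo (0:ℝ) 1, (log (1 - x ^ 2) ^ 2 / x + log ((1 - x) / (1 + x)) ^ 2 / x) :=
    setIntegral_congr_fun measurableSet_Ioo key
  rw [integral_add (hJ_int.const_mul 2) (L1.1.const_mul 2), integral_add L3.1 L4.1,
    integral_const_mul, integral_const_mul, L1.2, L3.2, L4.2] at e1
  linarith

-- s-domain
lemma Bexp : IntegrableOn (fun s : ℝ => log (1 + exp (-s)) ^ 2) (Ioi 0) ∧
    ∫ s in Ioi (0:ℝ), log (1 + exp (-s)) ^ 2 = (1/4) * S := by
  have he : (fun s : ℝ => exp (-s) * (log (1 + exp (-s)) ^ 2 / exp (-s)))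
      = fun s : ℝ => log (1 + exp (-s)) ^ 2 := by
    funext s
    rw [mul_comm, div_mul_cancel₀ _ (Real.exp_ne_zero _)]
  constructor
  · exact ((cov_exp_int (fun x => log (1 + x) ^ 2 / x)).mp Jlem.1).congr_fun
      (fun s _ => congrFun he s) measurableSet_Ioi
  · calc ∫ s in Ioi (0:ℝ), log (1 + exp (-s)) ^ 2
        = ∫ s in Ioi (0:ℝ), exp (-s) * (log (1 + exp (-s)) ^ 2 / exp (-s)) := by rw [he]
      _ = (1/4) * S := by rw [← cov_exp (fun x => log (1 + x) ^ 2 / x)]; exact Jlem.2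

lemma Aexp : IntegrableOn (fun s : ℝ => log (1 + exp (-s)) * s) (Ioi 0) ∧
    ∫ s in Ioi (0:ℝ), log (1 + exp (-s)) * s = (3/4) * S := by
  have he : (fun s : ℝ => exp (-s) * (log (1 + exp (-s)) * (-log (exp (-s))) / exp (-s)))
      = fun s : ℝ => log (1 + exp (-s)) * s := by
    funext s
    rw [Real.log_exp, neg_neg, mul_comm, div_mul_cancel₀ _ (Real.exp_ne_zero _)]
  constructor
  · exact ((cov_exp_int (fun x => log (1 + x) * (-log x) / x)).mp TA.1).congr_fun
      (fun s _ => congrFun he s) measurableSet_Ioi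
  · calc ∫ s in Ioi (0:ℝ), log (1 + exp (-s)) * s
        = ∫ s in Ioi (0:ℝ), exp (-s) * (log (1 + exp (-s)) * (-log (exp (-s))) / exp (-s)) := by
          rw [he]
      _ = (3/4) * S := by rw [← cov_exp (fun x => log (1 + x) * (-log x) / x)]; exact TA.2

lemma Cneg : IntegrableOn (fun s : ℝ => log (1 + exp s) ^ 2) (Iio 0) ∧
    ∫ s in Iio (0:ℝ), log (1 + exp s) ^ 2 = (1/4) * S := by
  constructor
  · exact (cov_neg_int (fun s => log (1 + exp s) ^ 2)).mpr Bexp.1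
  · rw [cov_neg (fun s => log (1 + exp s) ^ 2)]
    exact Bexp.2

theorem stmt7 :
    (∑' k : ℕ, 1 / ((k : ℝ) + 1) ^ 3)
      = (1 / 2) * ∫ s : ℝ, (Real.log (1 + Real.exp s)) ^ 2 - (max 0 s) ^ 2 := by
  show S = _
  set G : ℝ → ℝ := fun s => log (1 + exp s) ^ 2 - max 0 s ^ 2 with hG
  have hIoiEq : EqOn G
      (fun s : ℝ => log (1 + exp (-s)) ^ 2 + 2 * (log (1 + exp (-s)) * s)) (Ioi 0) := by
    intro s hs
    have hs0 : (0:ℝ) < s := hs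
    have hlog : log (1 + exp s) = s + log (1 + exp (-s)) := by
      rw [show (1:ℝ) + exp s = exp s * (1 + exp (-s)) by
          rw [mul_add, mul_one, ← Real.exp_add]; simp [add_comm],
        Real.log_mul (Real.exp_ne_zero s) (by positivity), Real.log_exp]
    show log (1 + exp s) ^ 2 - max 0 s ^ 2 = _
    rw [hlog, max_eq_right hs0.le]
    ring
  have hIioEq : EqOn G (fun s : ℝ => log (1 + exp s) ^ 2) (Iio 0) := by
    intro s hs
    have hs0 : s < 0 := hs
    show log (1 + exp s) ^ 2 - max 0 s ^ 2 = _
    rw [max_eq_left hs0.le]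
    ring
  have hIoi_int : IntegrableOn G (Ioi 0) := by
    have h : IntegrableOn
        (fun s : ℝ => log (1 + exp (-s)) ^ 2 + 2 * (log (1 + exp (-s)) * s)) (Ioi 0) :=
      Bexp.1.add (Aexp.1.const_mul 2)
    exact h.congr_fun (fun s hs => (hIoiEq hs).symm) measurableSet_Ioi
  have hIoi_val : ∫ s in Ioi (0:ℝ), G s = (7/4) * S := by
    rw [setIntegral_congr_fun measurableSet_Ioi hIoiEq,
      integral_add Bexp.1 (Aexp.1.const_mul 2), integral_const_mul, Bexp.2, Aexp.2]
    ring
  have hIio_int : IntegrableOn G (Iio 0) := by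
    have h : IntegrableOn (fun s : ℝ => log (1 + exp s) ^ 2) (Iio 0) := Cneg.1
    exact h.congr_fun (fun s hs => (hIioEq hs).symm) measurableSet_Iio
  have hIio_val : ∫ s in Iio (0:ℝ), G s = (1/4) * S := by
    rw [setIntegral_congr_fun measurableSet_Iio hIioEq]
    exact Cneg.2
  have hIic_int : IntegrableOn G (Iic 0) := by
    rwa [integrableOn_Iic_iff_integrableOn_Iio]
  have htot := intervalIntegral.integral_Iic_add_Ioi (b := (0:ℝ)) (f := G) hIic_int hIoi_int
  rw [integral_Iic_eq_integral_Iio, hIio_val, hIoi_val] at htot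
  rw [← htot]
  linarith
end

section
/- For any $\ell \ge 0$ and $k \ge 1$, the function $g_\ell(X_1,\dots,X_k) := \sum_{K \subset \{1,\dots,k\}} (-1)^{|K|}\big(\log(1+\sum_{j\in K} X_j)\big)^\ell$ satisfies a bound $|g_\ell(X_1,\dots,X_k)| \le C_\ell \prod_{j=1}^k X_j$ on $[0,1]^k$ for some constant $C_\ell > 0$. -/
open MeasureTheory Real

noncomputable def gfun (ℓ k : ℕ) (X : Fin k → ℝ) : ℝ :=
  ∑ K : Finset (Fin k), (-1 : ℝ) ^ K.card * (Real.log (1 + ∑ j ∈ K, X j)) ^ ℓ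

/-- Iterated derivatives of a smooth-on-open-set function are smooth there. -/
lemma aux_contDiffOn_iteratedDeriv {f : ℝ → ℝ} {s : Set ℝ} (hs : IsOpen s)
    (hf : ContDiffOn ℝ ⊤ f s) (n : ℕ) : ContDiffOn ℝ ⊤ (iteratedDeriv n f) s := by
  induction n with
  | zero => simpa [iteratedDeriv_zero] using hf
  | succ n ih =>
    rw [iteratedDeriv_succ]
    exact ih.deriv_of_isOpen hs le_top

/-- Key lemma: alternating sums over powersets are controlled by the product of the
increments times a bound on the iterated derivative. -/
lemma aux_key {ι : Type*} [DecidableEq ι] (s : Finset ι) :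
    ∀ (f : ℝ → ℝ) (M : ℝ), ContDiffOn ℝ ⊤ f (Set.Ioi (-1)) →
    (∀ x ∈ Set.Icc (0 : ℝ) s.card, |iteratedDeriv s.card f x| ≤ M) →
    ∀ X : ι → ℝ, (∀ j ∈ s, X j ∈ Set.Icc (0 : ℝ) 1) →
    |∑ K ∈ s.powerset, (-1 : ℝ) ^ K.card * f (∑ j ∈ K, X j)| ≤ M * ∏ j ∈ s, X j := by
  induction s using Finset.induction_on with
  | empty =>
    intro f M _ hM X _
    simpa using hM 0 (by simp)
  | insert _ _ ha _ =>
    rename_i a t iht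
    intro f M hf hM X hX
    have hXa : X a ∈ Set.Icc (0:ℝ) 1 := hX a (Finset.mem_insert_self a t)
    have hXt : ∀ j ∈ t, X j ∈ Set.Icc (0:ℝ) 1 :=
      fun j hj => hX j (Finset.mem_insert_of_mem hj)
    -- sums over subsets of t are in [0, t.card]
    have hSK : ∀ K ∈ t.powerset, (0:ℝ) ≤ ∑ j ∈ K, X j := by
      intro K hK
      exact Finset.sum_nonneg fun j hj => (hXt j (Finset.mem_powerset.1 hK hj)).1
    have hopen : IsOpen (Set.Ioi (-1:ℝ)) := isOpen_Ioi
    have hderiv : ContDiffOn ℝ ⊤ (deriv f) (Set.Ioi (-1)) :=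
      hf.deriv_of_isOpen hopen le_top
    -- rewrite the sum over powerset of insert
    rw [Finset.sum_powerset_insert ha]
    have hsplit : ∀ K ∈ t.powerset,
        (-1:ℝ) ^ (insert a K).card * f (∑ j ∈ insert a K, X j)
          = -((-1:ℝ) ^ K.card * f (X a + ∑ j ∈ K, X j)) := by
      intro K hK
      have haK : a ∉ K := fun h => ha (Finset.mem_powerset.1 hK h)
      rw [Finset.card_insert_of_notMem haK, Finset.sum_insert haK, pow_succ]
      ring
    rw [Finset.sum_congr rfl hsplit]
    -- FTC for each term
    have hftc : ∀ K ∈ t.powerset,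
        f (X a + ∑ j ∈ K, X j) - f (∑ j ∈ K, X j)
          = ∫ u in (0:ℝ)..(X a), deriv f (u + ∑ j ∈ K, X j) := by
      intro K hK
      have hS := hSK K hK
      set S := ∑ j ∈ K, X j with hS'
      have hmem : ∀ u ∈ Set.uIcc (0:ℝ) (X a), (u + S) ∈ Set.Ioi (-1:ℝ) := by
        intro u hu
        have : (0:ℝ) ≤ u := by
          rcases Set.mem_uIcc.1 hu with h | h
          · exact h.1
          · linarith [h.1, hXa.1]
        simp only [Set.mem_Ioi]; linarith
      have h1 : ∀ u ∈ Set.uIcc (0:ℝ) (X a),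
          HasDerivAt (fun u => f (u + S)) (deriv f (u + S)) u := by
        intro u hu
        have hdiff : DifferentiableAt ℝ f (u + S) :=
          (hf.contDiffAt (hopen.mem_nhds (hmem u hu))).differentiableAt (by simp)
        simpa [Function.comp_def] using (hdiff.hasDerivAt.comp u ((hasDerivAt_id u).add_const S))
      have h2 : IntervalIntegrable (fun u => deriv f (u + S)) volume 0 (X a) := by
        apply ContinuousOn.intervalIntegrable
        have : ContinuousOn (deriv f) (Set.Ioi (-1:ℝ)) :=
          hderiv.continuousOn
        exact this.comp (by fun_prop) hmem
      have := intervalIntegral.integral_eq_sub_of_hasDerivAt h1 h2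
      rw [this]; ring_nf
    have hrw : ∑ K ∈ t.powerset, (-1:ℝ) ^ K.card * f (∑ j ∈ K, X j)
        + ∑ K ∈ t.powerset, -((-1:ℝ) ^ K.card * f (X a + ∑ j ∈ K, X j))
        = -∫ u in (0:ℝ)..(X a),
            ∑ K ∈ t.powerset, (-1:ℝ) ^ K.card * deriv f (u + ∑ j ∈ K, X j) := by
      rw [intervalIntegral.integral_finset_sum]
      · rw [← Finset.sum_add_distrib, ← Finset.sum_neg_distrib]
        apply Finset.sum_congr rfl
        intro K hK
        rw [intervalIntegral.integral_const_mul, ← hftc K hK]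
        ring
      · intro K hK
        apply IntervalIntegrable.const_mul
        apply ContinuousOn.intervalIntegrable
        have hc : ContinuousOn (deriv f) (Set.Ioi (-1:ℝ)) := hderiv.continuousOn
        apply hc.comp (by fun_prop)
        intro u hu
        have hS := hSK K hK
        have : (0:ℝ) ≤ u := by
          rcases Set.mem_uIcc.1 hu with h | h
          · exact h.1
          · linarith [h.1, hXa.1]
        simp only [Set.mem_Ioi]; linarith
    rw [hrw, abs_neg]
    -- bound the integral
    have hbound : ∀ u ∈ Set.uIoc (0:ℝ) (X a),
        ‖∑ K ∈ t.powerset, (-1:ℝ) ^ K.card * deriv f (u + ∑ j ∈ K, X j)‖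
          ≤ M * ∏ j ∈ t, X j := by
      intro u hu
      have hu' : 0 < u ∧ u ≤ X a := by
        rcases Set.mem_uIoc.1 hu with h | h
        · exact ⟨h.1, h.2⟩
        · exfalso; linarith [h.1, h.2, hXa.1]
      have hu0 : (0:ℝ) ≤ u := hu'.1.le
      have hu1 : u ≤ 1 := hu'.2.trans hXa.2
      -- apply induction hypothesis to y ↦ deriv f (y + u)
      have hcomp : ContDiffOn ℝ ⊤ (fun y => deriv f (y + u)) (Set.Ioi (-1)) := by
        apply hderiv.comp (ContDiff.contDiffOn (by fun_prop))
        intro y hy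
        simp only [Set.mem_Ioi] at *
        linarith
      have hMt : ∀ x ∈ Set.Icc (0:ℝ) t.card,
          |iteratedDeriv t.card (fun y => deriv f (y + u)) x| ≤ M := by
        intro x hx
        rw [iteratedDeriv_comp_add_const]
        show |iteratedDeriv t.card (deriv f) (x + u)| ≤ M
        have : iteratedDeriv t.card (deriv f) (x + u)
            = iteratedDeriv (t.card + 1) f (x + u) := by
          rw [iteratedDeriv_succ']
        rw [this]
        have hcard : ((insert a t).card : ℝ) = t.card + 1 := by
          rw [Finset.card_insert_of_notMem ha]; push_cast; ring
        have := hM (x + u) ⟨by linarith [hx.1], by rw [hcard]; linarith [hx.2]⟩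
        rwa [Finset.card_insert_of_notMem ha] at this
      have := iht (fun y => deriv f (y + u)) M hcomp hMt X hXt
      calc ‖∑ K ∈ t.powerset, (-1:ℝ) ^ K.card * deriv f (u + ∑ j ∈ K, X j)‖
          = |∑ K ∈ t.powerset, (-1:ℝ) ^ K.card * deriv f ((∑ j ∈ K, X j) + u)| := by
            rw [Real.norm_eq_abs]
            congr 1
            exact Finset.sum_congr rfl fun K _ => by rw [add_comm]
        _ ≤ M * ∏ j ∈ t, X j := this
    have hInt := intervalIntegral.norm_integral_le_of_norm_le_const hbound
    rw [Real.norm_eq_abs] at hInt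
    have hprod : ∏ j ∈ insert a t, X j = X a * ∏ j ∈ t, X j :=
      Finset.prod_insert ha
    rw [hprod]
    have habs : |X a - 0| = X a := by rw [sub_zero, abs_of_nonneg hXa.1]
    rw [habs] at hInt
    calc |∫ u in (0:ℝ)..(X a),
          ∑ K ∈ t.powerset, (-1:ℝ) ^ K.card * deriv f (u + ∑ j ∈ K, X j)|
        ≤ (M * ∏ j ∈ t, X j) * X a := hInt
      _ = M * (X a * ∏ j ∈ t, X j) := by ring

theorem stmt8 (ℓ k : ℕ) (hk : 1 ≤ k) :
    ∃ C > 0, ∀ X : Fin k → ℝ, (∀ j, X j ∈ Set.Icc (0:ℝ) 1) →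
      |gfun ℓ k X| ≤ C * ∏ j, X j := by
  set f : ℝ → ℝ := fun t => (Real.log (1 + t)) ^ ℓ with hf'
  have hf : ContDiffOn ℝ ⊤ f (Set.Ioi (-1)) := by
    intro x hx
    apply ContDiffWithinAt.pow
    apply ContDiffAt.contDiffWithinAt
    apply ContDiffAt.comp (g := Real.log)
    · exact Real.contDiffAt_log.2 (by simp only [Set.mem_Ioi] at hx; intro h; linarith)
    · fun_prop
  -- bound the k-th iterated derivative on [0, k]
  have hcont : ContinuousOn (iteratedDeriv k f) (Set.Icc (0:ℝ) k) := by
    apply ((aux_contDiffOn_iteratedDeriv isOpen_Ioi hf k).continuousOn).mono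
    intro x hx
    simp only [Set.mem_Ioi]
    linarith [hx.1]
  obtain ⟨M, hM⟩ := (isCompact_Icc).exists_bound_of_continuousOn hcont
  refine ⟨max M 1, lt_of_lt_of_le one_pos (le_max_right _ _), ?_⟩
  intro X hX
  have hMbound : ∀ x ∈ Set.Icc (0:ℝ) ((Finset.univ : Finset (Fin k)).card : ℝ),
      |iteratedDeriv (Finset.univ : Finset (Fin k)).card f x| ≤ max M 1 := by
    intro x hx
    simp only [Finset.card_univ, Fintype.card_fin] at hx ⊢
    exact le_trans (hM x hx) (le_max_left _ _)
  have := aux_key (Finset.univ : Finset (Fin k)) f (max M 1) hf hMbound X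
    (fun j _ => hX j)
  rw [Finset.powerset_univ] at this
  exact this
end

section
/- For all integers $\ell \ge 1$, $k \ge 1$, and $m_1,\dots,m_k \ge 0$, the integral $I_{\ell; m_1,\dots,m_k} := \int_{[0,\infty)^k} s_1^{m_1}\cdots s_k^{m_k}\, g_\ell(e^{-s_1},\dots,e^{-s_k})\,ds_1\cdots ds_k$ converges absolutely. -/
open MeasureTheory Real

-- Lipschitz bound for u ↦ (log (1+u))^ℓ on [0, k]
lemma lip_bound (ℓ k : ℕ) {a b : ℝ} (ha : a ∈ Set.Icc (0:ℝ) k)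
    (hb : b ∈ Set.Icc (0:ℝ) k) :
    |Real.log (1 + a) ^ ℓ - Real.log (1 + b) ^ ℓ| ≤
      (ℓ * Real.log (1 + k) ^ (ℓ - 1)) * |a - b| := by
  have key := Convex.norm_image_sub_le_of_norm_deriv_le
    (f := fun u : ℝ => Real.log (1 + u) ^ ℓ)
    (C := ℓ * Real.log (1 + k) ^ (ℓ - 1)) (s := Set.Icc (0:ℝ) k) ?_ ?_ (convex_Icc _ _) hb ha
  · simpa [Real.norm_eq_abs] using key
  · intro x hx
    have hx1 : (0:ℝ) < 1 + x := by have := hx.1; linarith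
    have h1 : HasDerivAt (fun u : ℝ => Real.log (1 + u)) (1 / (1 + x)) x := by
      have := (Real.hasDerivAt_log (ne_of_gt hx1)).comp x
        ((hasDerivAt_id x).const_add 1)
      simpa [one_div, Function.comp_def] using this
    exact (h1.pow ℓ).differentiableAt
  · intro x hx
    have hx1 : (0:ℝ) < 1 + x := by have := hx.1; linarith
    have h1 : HasDerivAt (fun u : ℝ => Real.log (1 + u)) (1 / (1 + x)) x := by
      have := (Real.hasDerivAt_log (ne_of_gt hx1)).comp x
        ((hasDerivAt_id x).const_add 1)
      simpa [one_div, Function.comp_def] using this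
    have hd : deriv (fun u : ℝ => Real.log (1 + u) ^ ℓ) x = _ := (h1.pow ℓ).deriv
    rw [hd]
    have hlx : 0 ≤ Real.log (1 + x) := Real.log_nonneg (by linarith [hx.1])
    have hlk : Real.log (1 + x) ≤ Real.log (1 + k) :=
      Real.log_le_log (by linarith [hx.1]) (by linarith [hx.2])
    have hlk0 : 0 ≤ Real.log (1 + (k:ℝ)) := le_trans hlx hlk
    have h2 : Real.log (1 + x) ^ (ℓ - 1) ≤ Real.log (1 + (k:ℝ)) ^ (ℓ - 1) :=
      pow_le_pow_left₀ hlx hlk _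
    have h4 : 1 / (1 + x) ≤ 1 := by
      rw [div_le_one hx1]; linarith [hx.1]
    have h5 : 0 ≤ 1 / (1 + x) := by positivity
    rw [Real.norm_eq_abs, abs_of_nonneg (by positivity)]
    calc (ℓ : ℝ) * Real.log (1 + x) ^ (ℓ - 1) * (1 / (1 + x))
        ≤ (ℓ : ℝ) * Real.log (1 + x) ^ (ℓ - 1) * 1 := by
          apply mul_le_mul_of_nonneg_left h4 (by positivity)
      _ ≤ (ℓ : ℝ) * Real.log (1 + (k:ℝ)) ^ (ℓ - 1) := by
          rw [mul_one]; exact mul_le_mul_of_nonneg_left h2 (by positivity)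

-- the key bound: |gfun ℓ k X| ≤ C * X j0 for each j0, when 0 ≤ X ≤ 1
lemma gfun_bound (ℓ k : ℕ) (X : Fin k → ℝ)
    (hX0 : ∀ j, 0 ≤ X j) (hX1 : ∀ j, X j ≤ 1) (j0 : Fin k) :
    |gfun ℓ k X| ≤ (2 ^ k * (ℓ * Real.log (1 + k) ^ (ℓ - 1))) * X j0 := by
  classical
  set L : ℝ := ℓ * Real.log (1 + k) ^ (ℓ - 1) with hL
  have hlog0 : 0 ≤ Real.log (1 + (k:ℝ)) := Real.log_nonneg (by linarith [Nat.cast_nonneg (α := ℝ) k])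
  have hL0 : 0 ≤ L := mul_nonneg (by positivity) (pow_nonneg hlog0 _)
  have hsum : ∀ K : Finset (Fin k), (∑ j ∈ K, X j) ∈ Set.Icc (0:ℝ) k := by
    intro K
    constructor
    · exact Finset.sum_nonneg fun j _ => hX0 j
    · have hkc : K.card ≤ k := by simpa using K.card_le_univ
      calc ∑ j ∈ K, X j ≤ ∑ _j ∈ K, (1:ℝ) := Finset.sum_le_sum fun j _ => hX1 j
        _ = K.card := by simp
        _ ≤ (k:ℝ) := by exact_mod_cast hkc
  have hj0 : j0 ∉ Finset.univ.erase j0 := Finset.notMem_erase _ _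
  have huniv : (Finset.univ : Finset (Fin k)) = insert j0 (Finset.univ.erase j0) := by
    simp [Finset.insert_erase (Finset.mem_univ j0)]
  have hrw : gfun ℓ k X =
      ∑ K ∈ (Finset.univ.erase j0).powerset,
        ((-1 : ℝ) ^ K.card * (Real.log (1 + ∑ j ∈ K, X j)) ^ ℓ
          + (-1 : ℝ) ^ (insert j0 K).card *
            (Real.log (1 + ∑ j ∈ insert j0 K, X j)) ^ ℓ) := by
    simp only [gfun]
    conv_lhs => rw [← Finset.powerset_univ, huniv]
    rw [Finset.sum_powerset_insert hj0, ← Finset.sum_add_distrib]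
  rw [hrw]
  calc |∑ K ∈ (Finset.univ.erase j0).powerset,
        ((-1 : ℝ) ^ K.card * (Real.log (1 + ∑ j ∈ K, X j)) ^ ℓ
          + (-1 : ℝ) ^ (insert j0 K).card *
            (Real.log (1 + ∑ j ∈ insert j0 K, X j)) ^ ℓ)| ≤
      ∑ K ∈ (Finset.univ.erase j0).powerset,
        |(-1 : ℝ) ^ K.card * (Real.log (1 + ∑ j ∈ K, X j)) ^ ℓ
          + (-1 : ℝ) ^ (insert j0 K).card *
            (Real.log (1 + ∑ j ∈ insert j0 K, X j)) ^ ℓ| := Finset.abs_sum_le_sum_abs _ _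
    _ ≤ ∑ _K ∈ (Finset.univ.erase j0).powerset, L * X j0 := by
        apply Finset.sum_le_sum
        intro K hK
        have hjK : j0 ∉ K := fun h => hj0 (Finset.mem_powerset.1 hK h)
        have hcard : (insert j0 K).card = K.card + 1 := Finset.card_insert_of_notMem hjK
        have hS : ∑ j ∈ insert j0 K, X j = X j0 + ∑ j ∈ K, X j :=
          Finset.sum_insert hjK
        rw [hcard, hS, pow_succ]
        have e1 : (-1 : ℝ) ^ K.card * Real.log (1 + ∑ j ∈ K, X j) ^ ℓ
            + (-1 : ℝ) ^ K.card * (-1) * Real.log (1 + (X j0 + ∑ j ∈ K, X j)) ^ ℓ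
            = (-1 : ℝ) ^ K.card * (Real.log (1 + ∑ j ∈ K, X j) ^ ℓ
              - Real.log (1 + (X j0 + ∑ j ∈ K, X j)) ^ ℓ) := by ring
        rw [e1, abs_mul, abs_pow, abs_neg, abs_one, one_pow, one_mul]
        have hmem1 := hsum K
        have hmem2 : (X j0 + ∑ j ∈ K, X j) ∈ Set.Icc (0:ℝ) k := by
          have := hsum (insert j0 K)
          rwa [hS] at this
        calc |Real.log (1 + ∑ j ∈ K, X j) ^ ℓ
              - Real.log (1 + (X j0 + ∑ j ∈ K, X j)) ^ ℓ|
            ≤ L * |(∑ j ∈ K, X j) - (X j0 + ∑ j ∈ K, X j)| := lip_bound ℓ k hmem1 hmem2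
          _ = L * X j0 := by
              rw [show (∑ j ∈ K, X j) - (X j0 + ∑ j ∈ K, X j) = -X j0 by ring,
                abs_neg, abs_of_nonneg (hX0 j0)]
    _ = ((Finset.univ.erase j0).powerset.card : ℝ) * (L * X j0) := by
        rw [Finset.sum_const, nsmul_eq_mul]
    _ ≤ 2 ^ k * (L * X j0) := by
        refine mul_le_mul_of_nonneg_right ?_ (mul_nonneg hL0 (hX0 j0))
        rw [Finset.card_powerset]
        have hcle : (Finset.univ.erase j0).card ≤ k :=
          le_trans (Finset.card_erase_le) (by simp)
        exact_mod_cast Nat.pow_le_pow_right (by norm_num) hcle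
    _ = (2 ^ k * L) * X j0 := by ring

theorem stmt9 (ℓ k : ℕ) (hℓ : 1 ≤ ℓ) (hk : 1 ≤ k) (m : Fin k → ℕ) :
    MeasureTheory.IntegrableOn
      (fun s : Fin k → ℝ => (∏ j, s j ^ m j) * gfun ℓ k (fun i => Real.exp (-s i)))
      {s | ∀ j, 0 ≤ s j} := by
  classical
  have hk0 : (0:ℝ) < k := by exact_mod_cast hk
  set C : ℝ := 2 ^ k * (ℓ * Real.log (1 + k) ^ (ℓ - 1)) with hC
  have hlog0 : 0 ≤ Real.log (1 + (k:ℝ)) := Real.log_nonneg (by linarith [Nat.cast_nonneg (α := ℝ) k])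
  have hC0 : 0 ≤ C := by
    rw [hC]
    exact mul_nonneg (by positivity) (mul_nonneg (by positivity) (pow_nonneg hlog0 _))
  set G : (Fin k → ℝ) → ℝ :=
    fun s => C * ∏ j, (|s j| ^ m j * Real.exp (-(1/k) * |s j|)) with hG
  have hb : (0:ℝ) < 1 / k := by positivity
  -- 1-d integrability
  have h1d : ∀ j : Fin k, Integrable (fun x : ℝ => |x| ^ m j * Real.exp (-(1/k) * |x|)) := by
    intro j
    have hIoi : IntegrableOn (fun x : ℝ => x ^ m j * Real.exp (-(1/k) * x)) (Set.Ioi 0) := by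
      have := integrableOn_rpow_mul_exp_neg_mul_rpow
        (p := 1) (s := (m j : ℝ)) (b := 1/k) (lt_of_lt_of_le neg_one_lt_zero (Nat.cast_nonneg _)) one_pos hb
      apply this.congr_fun _ measurableSet_Ioi
      intro x hx
      simp [Real.rpow_natCast]
    have habs : IntegrableOn (fun x : ℝ => |x| ^ m j * Real.exp (-(1/k) * |x|))
        (Set.Ioi 0) := by
      apply hIoi.congr_fun _ measurableSet_Ioi
      intro x hx
      simp [abs_of_pos (Set.mem_Ioi.mp hx)]
    have hneg : IntegrableOn (fun x : ℝ => |x| ^ m j * Real.exp (-(1/k) * |x|))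
        (Set.Iio 0) := by
      rw [← (Measure.measurePreserving_neg (volume : Measure ℝ)).integrableOn_comp_preimage
          (Homeomorph.neg ℝ).measurableEmbedding]
      simp only [Function.comp_def, abs_neg, Set.neg_preimage, Set.neg_Iio, neg_zero]
      exact habs
    rw [← integrableOn_univ, ← @Set.Iio_union_Ici _ _ (0 : ℝ), integrableOn_union,
      integrableOn_Ici_iff_integrableOn_Ioi]
    exact ⟨hneg, habs⟩
  have hGint : Integrable G := by
    apply Integrable.const_mul
    exact Integrable.fintype_prod (f := fun j (x : ℝ) => |x| ^ m j * Real.exp (-(1/k) * |x|)) h1d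
  have hmeasS : MeasurableSet {s : Fin k → ℝ | ∀ j, 0 ≤ s j} := by
    have : {s : Fin k → ℝ | ∀ j, 0 ≤ s j} = Set.pi Set.univ (fun _ => Set.Ici 0) := by
      ext s; simp [Set.mem_pi, Pi.le_def]
    rw [this]
    exact MeasurableSet.univ_pi fun _ => measurableSet_Ici
  have hcont : Continuous
      (fun s : Fin k → ℝ => (∏ j, s j ^ m j) * gfun ℓ k (fun i => Real.exp (-s i))) := by
    apply Continuous.mul
    · exact continuous_finset_prod _ fun j _ => (continuous_apply j).pow _
    · simp only [gfun]
      apply continuous_finset_sum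
      intro K _
      apply Continuous.mul continuous_const
      apply Continuous.pow
      apply Continuous.log
      · exact continuous_const.add (continuous_finset_sum _ fun j _ =>
          ((continuous_apply j).neg.rexp))
      · intro s
        have : (0:ℝ) ≤ ∑ j ∈ K, Real.exp (-s j) :=
          Finset.sum_nonneg fun j _ => (Real.exp_pos _).le
        intro h; linarith
  apply Integrable.mono' hGint.integrableOn hcont.aestronglyMeasurable.restrict
  filter_upwards [ae_restrict_mem hmeasS] with s hs
  have hs' : ∀ j, 0 ≤ s j := hs
  have hne : (Finset.univ : Finset (Fin k)).Nonempty := ⟨⟨0, hk⟩, Finset.mem_univ _⟩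
  obtain ⟨j0, _, hj0⟩ := Finset.exists_le_of_sum_le (f := fun _ : Fin k => (∑ i, s i) / k)
    (g := s) hne (by
      rw [Finset.sum_const, nsmul_eq_mul]
      simp only [Finset.card_univ, Fintype.card_fin]
      rw [mul_div_cancel₀]
      exact ne_of_gt hk0)
  have hXj0 : Real.exp (-s j0) ≤ Real.exp (-(∑ i, s i) / k) := by
    apply Real.exp_le_exp.2
    rw [neg_div]
    exact neg_le_neg hj0
  have hgb := gfun_bound ℓ k (fun i => Real.exp (-s i))
    (fun j => (Real.exp_pos _).le)
    (fun j => Real.exp_le_one_iff.2 (by simpa using hs' j)) j0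
  rw [Real.norm_eq_abs, abs_mul]
  have hprod : |∏ j, s j ^ m j| = ∏ j, |s j| ^ m j := by
    rw [Finset.abs_prod]; exact Finset.prod_congr rfl fun j _ => abs_pow _ _
  rw [hprod]
  have hexp : Real.exp (-(∑ i, s i) / k) = ∏ j, Real.exp (-(1/k) * |s j|) := by
    rw [← Real.exp_sum]
    congr 1
    have habs' : ∀ j ∈ (Finset.univ : Finset (Fin k)),
        -(1/(k:ℝ)) * |s j| = -(1/k) * s j := fun j _ => by rw [abs_of_nonneg (hs' j)]
    rw [Finset.sum_congr rfl habs', ← Finset.mul_sum]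
    field_simp
  calc (∏ j, |s j| ^ m j) * |gfun ℓ k fun i => Real.exp (-s i)|
      ≤ (∏ j, |s j| ^ m j) * (C * Real.exp (-s j0)) := by
        refine mul_le_mul_of_nonneg_left hgb (Finset.prod_nonneg fun j _ => by positivity)
    _ ≤ (∏ j, |s j| ^ m j) * (C * Real.exp (-(∑ i, s i) / k)) := by
        refine mul_le_mul_of_nonneg_left ?_ (Finset.prod_nonneg fun j _ => by positivity)
        exact mul_le_mul_of_nonneg_left hXj0 hC0
    _ = G s := by
        simp only [hG]
        rw [hexp, Finset.prod_mul_distrib]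
        ring
end

section
/- For positive real numbers $D_1, \dots, D_m$ with $\sigma = \sum_j D_j$ and $m \ge 2$: $\sum_{q=1}^m \int_{[0,\infty)^{\{1,\dots,m\}\setminus\{q\}}} e^{-\sum_{k\neq q} D_k s_k}\Big(1 + \sum_{k\neq q} e^{-s_k}\Big)^{-\sigma}\,ds = \frac{\Gamma(D_1)\cdots\Gamma(D_m)}{\Gamma(\sigma)}$. -/
open MeasureTheory Real Set Filter Topology
open scoped ENNReal

noncomputable def iG (c u : ℝ) : ℝ := ∫ x in (0:ℝ)..u, x ^ (c-1) * Real.exp (-x)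

lemma f_int {c : ℝ} (hc : 0 < c) :
    IntegrableOn (fun x : ℝ => x ^ (c-1) * Real.exp (-x)) (Ioi 0) := by
  have := Real.GammaIntegral_convergent hc
  simpa [mul_comm] using this

lemma f_meas {c : ℝ} : Measurable (fun x : ℝ => x ^ (c-1) * Real.exp (-x)) := by
  fun_prop

lemma Gamma_eq' {c : ℝ} (hc : 0 < c) :
    Real.Gamma c = ∫ x in Ioi (0:ℝ), x ^ (c-1) * Real.exp (-x) := by
  rw [Real.Gamma_eq_integral hc]; simp_rw [mul_comm]

lemma iG_zero (c : ℝ) : iG c 0 = 0 := intervalIntegral.integral_same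

lemma iG_eq_Ioc {c u : ℝ} (hu : 0 ≤ u) :
    iG c u = ∫ x in Ioc (0:ℝ) u, x ^ (c-1) * Real.exp (-x) :=
  intervalIntegral.integral_of_le hu

lemma iG_nonneg {c u : ℝ} (hu : 0 ≤ u) : 0 ≤ iG c u := by
  rw [iG_eq_Ioc hu]
  refine setIntegral_nonneg measurableSet_Ioc fun x hx => ?_
  exact mul_nonneg (Real.rpow_nonneg hx.1.le _) (Real.exp_pos _).le

lemma iG_le {c : ℝ} (hc : 0 < c) {u : ℝ} (hu : 0 ≤ u) : iG c u ≤ Real.Gamma c := by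
  rw [iG_eq_Ioc hu, Gamma_eq' hc]
  refine setIntegral_mono_set (f_int hc) ?_ ?_
  · filter_upwards [ae_restrict_mem measurableSet_Ioi] with x hx
    exact mul_nonneg (Real.rpow_nonneg (le_of_lt hx) _) (Real.exp_pos _).le
  · exact HasSubset.Subset.eventuallyLE Ioc_subset_Ioi_self

lemma iG_hasDeriv {c : ℝ} (hc : 0 < c) {u : ℝ} (hu : 0 < u) :
    HasDerivAt (iG c) (u ^ (c-1) * Real.exp (-u)) u := by
  refine intervalIntegral.integral_hasDerivAt_right ?_ ?_ ?_
  · rw [intervalIntegrable_iff_integrableOn_Ioc_of_le hu.le]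
    exact (f_int hc).mono_set Ioc_subset_Ioi_self
  · exact f_meas.stronglyMeasurable.stronglyMeasurableAtFilter
  · exact ((Real.continuousAt_rpow_const _ _ (Or.inl hu.ne')).mul
      ((Real.continuous_exp.comp continuous_neg).continuousAt))

lemma iG_tendsto {c : ℝ} (hc : 0 < c) :
    Tendsto (iG c) atTop (𝓝 (Real.Gamma c)) := by
  rw [Gamma_eq' hc]
  exact intervalIntegral_tendsto_integral_Ioi 0 (f_int hc) tendsto_id

lemma iG_contWithin {c : ℝ} (hc : 0 < c) :
    ContinuousWithinAt (iG c) (Ici 0) 0 := by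
  have h1 : ContinuousOn (fun x => ∫ t in Ioc (0:ℝ) x, t ^ (c-1) * Real.exp (-t)) (Icc 0 1) :=
    intervalIntegral.continuousOn_primitive
      ((integrableOn_Icc_iff_integrableOn_Ioc).mpr ((f_int hc).mono_set Ioc_subset_Ioi_self))
  have h2 : ContinuousWithinAt (fun x => ∫ t in Ioc (0:ℝ) x, t ^ (c-1) * Real.exp (-t))
      (Ici 0) 0 := by
    refine (h1 0 (by simp)).mono_of_mem_nhdsWithin ?_
    have : Icc (0:ℝ) 1 = Ici 0 ∩ Iic 1 := (Ici_inter_Iic).symm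
    rw [this]
    exact inter_mem_nhdsWithin _ (Iic_mem_nhds one_pos)
  refine h2.congr (fun x hx => iG_eq_Ioc hx) (by simp [iG_zero])

lemma iG_continuousOn {c : ℝ} (hc : 0 < c) : ContinuousOn (iG c) (Ioi 0) :=
  fun u hu => ((iG_hasDeriv hc hu).continuousAt).continuousWithinAt

lemma image_aux {u : ℝ} (hu : 0 < u) :
    (fun x : ℝ => u * Real.exp (-x)) '' Ioi 0 = Ioo 0 u := by
  ext y
  constructor
  · rintro ⟨x, hx, rfl⟩
    constructor
    · positivity
    · have : Real.exp (-x) < 1 := by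
        rw [Real.exp_lt_one_iff]; simpa using hx
      calc u * Real.exp (-x) < u * 1 := by
            exact mul_lt_mul_of_pos_left this hu
        _ = u := mul_one u
  · rintro ⟨hy0, hyu⟩
    refine ⟨Real.log (u / y), ?_, ?_⟩
    · apply Real.log_pos
      rw [lt_div_iff₀ hy0]; simpa using hyu
    · show u * Real.exp (-Real.log (u / y)) = y
      rw [Real.exp_neg, Real.exp_log (by positivity)]
      field_simp
lemma iG_eq {c : ℝ} (hc : 0 < c) {u : ℝ} (hu : 0 < u) :
    iG c u = u ^ c * ∫ x in Ioi (0:ℝ), Real.exp (-(c*x) - u * Real.exp (-x)) := by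
  have hderiv : ∀ x ∈ Ioi (0:ℝ), HasDerivWithinAt (fun x : ℝ => u * Real.exp (-x))
      (-(u * Real.exp (-x))) (Ioi 0) x := by
    intro x _
    have h1 : HasDerivAt (fun x : ℝ => Real.exp (-x)) (Real.exp (-x) * (-1)) x :=
      (Real.hasDerivAt_exp (-x)).comp x (hasDerivAt_neg x)
    have := h1.const_mul u
    refine HasDerivWithinAt.congr_deriv this.hasDerivWithinAt ?_
    ring
  have hinj : InjOn (fun x : ℝ => u * Real.exp (-x)) (Ioi 0) := by
    intro x1 _ x2 _ h
    have := mul_left_cancel₀ hu.ne' h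
    have := Real.exp_injective this
    linarith [neg_injective this]
  have key := integral_image_eq_integral_abs_deriv_smul measurableSet_Ioi hderiv hinj
    (fun y => y ^ (c-1) * Real.exp (-y))
  rw [image_aux hu] at key
  have h1 : iG c u = ∫ x in Ioo (0:ℝ) u, x ^ (c-1) * Real.exp (-x) := by
    rw [iG_eq_Ioc hu.le, integral_Ioc_eq_integral_Ioo]
  rw [h1, key, ← integral_const_mul]
  refine setIntegral_congr_fun measurableSet_Ioi fun x _ => ?_
  have he : (0:ℝ) < Real.exp (-x) := Real.exp_pos _
  have h2 : (u * Real.exp (-x)) ^ (c-1) = u ^ (c-1) * Real.exp (-x) ^ (c-1) :=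
    Real.mul_rpow hu.le he.le
  have h3 : Real.exp (-x) ^ (c-1) = Real.exp (-x * (c-1)) := (Real.exp_mul _ _).symm
  have h4 : u ^ c = u * u ^ (c-1) := by
    nth_rewrite 2 [← Real.rpow_one u]
    rw [← Real.rpow_add hu]; ring_nf
  rw [abs_neg, abs_of_pos (by positivity), smul_eq_mul, h2, h3, h4]
  rw [show -(c*x) - u * Real.exp (-x) = (-x) + ((-x*(c-1)) + (-(u * Real.exp (-x)))) by ring,
    Real.exp_add, Real.exp_add]
  ring

noncomputable def hF (c u : ℝ) : ℝ → ℝ :=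
  Set.indicator (Ici 0) (fun x => Real.exp (-(c*x) - u * Real.exp (-x)))

lemma hF_meas (c u : ℝ) : Measurable (hF c u) := by
  apply Measurable.indicator _ measurableSet_Ici
  fun_prop

lemma hF_nonneg (c u : ℝ) (x : ℝ) : 0 ≤ hF c u x :=
  Set.indicator_nonneg (fun y _ => (Real.exp_pos _).le) x

lemma hF_int {c : ℝ} (hc : 0 < c) {u : ℝ} (hu : 0 ≤ u) : Integrable (hF c u) := by
  have hbound : Integrable (Set.indicator (Ici 0) (fun x : ℝ => Real.exp (-(c*x)))) := by
    refine IntegrableOn.integrable_indicator ?_ measurableSet_Ici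
    refine (integrableOn_Ici_iff_integrableOn_Ioi).mpr ?_
    simpa [neg_mul] using exp_neg_integrableOn_Ioi (0:ℝ) hc
  refine hbound.mono ((hF_meas c u).aestronglyMeasurable) (ae_of_all _ fun x => ?_)
  rw [Real.norm_eq_abs, abs_of_nonneg (hF_nonneg c u x)]
  by_cases hx : x ∈ Ici (0:ℝ)
  · rw [hF, Set.indicator_of_mem hx, Set.indicator_of_mem hx, Real.norm_eq_abs,
      abs_of_nonneg (Real.exp_pos _).le]
    apply Real.exp_le_exp.mpr
    have : 0 ≤ u * Real.exp (-x) := by positivity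
    linarith
  · simp [hF, Set.indicator_of_notMem hx]

lemma hF_integral (c u : ℝ) :
    ∫ x, hF c u x = ∫ x in Ioi (0:ℝ), Real.exp (-(c*x) - u * Real.exp (-x)) := by
  rw [hF, integral_indicator measurableSet_Ici, integral_Ici_eq_integral_Ioi]

lemma term_int {ι : Type*} {a : ℝ} (ha : 0 < a) (u : Finset ι) (c : ι → ℝ)
    (hc : ∀ i ∈ u, 0 < c i) :
    IntegrableOn (fun t => t ^ (a-1) * Real.exp (-t) * ∏ i ∈ u, iG (c i) t) (Ioi 0) := by
  have hcont : ContinuousOn (fun t => t ^ (a-1) * Real.exp (-t) * ∏ i ∈ u, iG (c i) t)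
      (Ioi 0) := by
    intro t ht
    have h1 : ContinuousAt (fun t : ℝ => t ^ (a-1) * Real.exp (-t)) t :=
      (Real.continuousAt_rpow_const _ _ (Or.inl (ne_of_gt ht))).mul
        ((Real.continuous_exp.comp continuous_neg).continuousAt)
    have h2 : ContinuousAt (fun t => ∏ i ∈ u, iG (c i) t) t :=
      tendsto_finset_prod u fun i hi => (iG_hasDeriv (hc i hi) ht).continuousAt
    exact (h1.mul h2).continuousWithinAt
  refine Integrable.mono ((f_int ha).const_mul (∏ i ∈ u, Real.Gamma (c i)))
    (hcont.aestronglyMeasurable measurableSet_Ioi) ?_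
  filter_upwards [ae_restrict_mem measurableSet_Ioi] with t ht
  have ht' : (0:ℝ) < t := ht
  have hnn : 0 ≤ t ^ (a-1) * Real.exp (-t) :=
    mul_nonneg (Real.rpow_nonneg ht'.le _) (Real.exp_pos _).le
  rw [Real.norm_eq_abs, Real.norm_eq_abs,
    abs_of_nonneg (mul_nonneg hnn (Finset.prod_nonneg fun i _ => iG_nonneg ht'.le)),
    abs_of_nonneg (mul_nonneg (Finset.prod_nonneg fun i hi => (Real.Gamma_pos_of_pos (hc i hi)).le) hnn)]
  rw [mul_comm (∏ i ∈ u, Real.Gamma (c i)) _]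
  refine mul_le_mul_of_nonneg_left ?_ hnn
  exact Finset.prod_le_prod (fun i _ => iG_nonneg ht'.le) (fun i hi => iG_le (hc i hi) ht'.le)

lemma keyQ {ι : Type*} [Fintype ι] (Dk : ι → ℝ) (hDk : ∀ i, 0 < Dk i)
    (a : ℝ) (ha : 0 < a) (σ : ℝ) (hσ : σ = a + ∑ i, Dk i) :
    (∫ s in {s : ι → ℝ | ∀ i, 0 ≤ s i},
        Real.exp (-∑ i, Dk i * s i) * (1 + ∑ i, Real.exp (-s i)) ^ (-σ))
      = (Real.Gamma σ)⁻¹ *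
        ∫ t in Ioi (0:ℝ), t ^ (a-1) * Real.exp (-t) * ∏ i, iG (Dk i) t := by
  have hσ0 : 0 < σ := by
    rw [hσ]; exact add_pos_of_pos_of_nonneg ha (Finset.sum_nonneg fun i _ => (hDk i).le)
  have hΓ : 0 < Real.Gamma σ := Real.Gamma_pos_of_pos hσ0
  set S := {s : ι → ℝ | ∀ i, 0 ≤ s i} with hSdef
  have hS : MeasurableSet S := by
    have : S = Set.pi Set.univ (fun _ : ι => Ici (0:ℝ)) := by
      ext s; exact ⟨fun h i _ => h i, fun h i => h i (mem_univ i)⟩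
    rw [this]; exact MeasurableSet.pi Set.countable_univ (fun i _ => measurableSet_Ici)
  set F := fun s : ι → ℝ =>
    Real.exp (-∑ i, Dk i * s i) * (1 + ∑ i, Real.exp (-s i)) ^ (-σ) with hFdef
  have hb : ∀ s : ι → ℝ, 0 < 1 + ∑ i, Real.exp (-s i) := fun s => by positivity
  have hsum_cont : Continuous fun s : ι → ℝ => 1 + ∑ i, Real.exp (-s i) :=
    continuous_const.add (continuous_finset_sum _ fun i _ =>
      Real.continuous_exp.comp (continuous_apply i).neg)
  have hFc : Continuous F := by
    refine Continuous.mul ?_ ?_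
    · exact Real.continuous_exp.comp
        (continuous_finset_sum _ fun i _ => (continuous_const.mul (continuous_apply i))).neg
    · exact hsum_cont.rpow_const fun s => Or.inl (hb s).ne'
  have hF0 : ∀ s, 0 ≤ F s := fun s =>
    mul_nonneg (Real.exp_pos _).le (Real.rpow_nonneg (hb s).le _)
  set Ψ := fun (s : ι → ℝ) (t : ℝ) =>
    (S.indicator (fun s => Real.exp (-∑ i, Dk i * s i)) s) *
      (t ^ (σ-1) * Real.exp (-((1 + ∑ i, Real.exp (-s i)) * t))) with hΨdef
  have hΨmeas : Measurable (Function.uncurry Ψ) := by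
    apply Measurable.mul
    · exact ((Real.continuous_exp.comp
        (continuous_finset_sum _ fun i _ =>
          (continuous_const.mul (continuous_apply i))).neg).measurable.indicator hS).comp
        measurable_fst
    · apply Measurable.mul
      · exact measurable_snd.pow_const _
      · exact (Real.continuous_exp.comp
          (((hsum_cont.comp continuous_fst).mul continuous_snd).neg)).measurable
  have cne : ENNReal.ofReal (Real.Gamma σ) ≠ 0 := by
    simp [ENNReal.ofReal_eq_zero, not_le, hΓ]
  have cnetop : (ENNReal.ofReal (Real.Gamma σ))⁻¹ ≠ ⊤ := ENNReal.inv_ne_top.mpr cne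
  have ptw : ∀ s, ENNReal.ofReal (S.indicator F s) =
      (ENNReal.ofReal (Real.Gamma σ))⁻¹ * ∫⁻ t in Ioi 0, ENNReal.ofReal (Ψ s t) := by
    intro s
    by_cases hs : s ∈ S
    · rw [Set.indicator_of_mem hs]
      have hbs := hb s
      have hint : IntegrableOn
          (fun t : ℝ => t ^ (σ-1) * Real.exp (-((1 + ∑ i, Real.exp (-s i)) * t))) (Ioi 0) := by
        have := integrableOn_rpow_mul_exp_neg_mul_rpow
          (show (-1:ℝ) < σ-1 by linarith) one_pos hbs
        refine this.congr_fun (fun t ht => ?_) measurableSet_Ioi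
        dsimp only; rw [Real.rpow_one, neg_mul]
      have hval : ∫ t in Ioi (0:ℝ), t ^ (σ-1) *
          Real.exp (-((1 + ∑ i, Real.exp (-s i)) * t))
          = (1/(1 + ∑ i, Real.exp (-s i))) ^ σ * Real.Gamma σ :=
        integral_rpow_mul_exp_neg_mul_Ioi hσ0 hbs
      have step : ∫⁻ t in Ioi (0:ℝ), ENNReal.ofReal (Ψ s t)
          = ENNReal.ofReal (Real.exp (-∑ i, Dk i * s i)) *
            ENNReal.ofReal ((1/(1 + ∑ i, Real.exp (-s i))) ^ σ * Real.Gamma σ) := by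
        simp_rw [hΨdef, Set.indicator_of_mem hs, ENNReal.ofReal_mul (Real.exp_pos _).le]
        rw [lintegral_const_mul' _ _ ENNReal.ofReal_ne_top, ← hval,
          ofReal_integral_eq_lintegral_ofReal hint]
        filter_upwards [ae_restrict_mem measurableSet_Ioi] with t ht
        exact mul_nonneg (Real.rpow_nonneg (le_of_lt ht) _) (Real.exp_pos _).le
      have hpow : (1 + ∑ i, Real.exp (-s i)) ^ (-σ)
          = (1/(1 + ∑ i, Real.exp (-s i))) ^ σ := by
        rw [Real.rpow_neg hbs.le, one_div, Real.inv_rpow hbs.le]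
      have lhs_eq : F s = Real.exp (-∑ i, Dk i * s i) *
          (1/(1 + ∑ i, Real.exp (-s i))) ^ σ := by
        rw [hFdef, ← hpow]
      rw [step, lhs_eq, ENNReal.ofReal_mul (Real.exp_pos _).le,
        ENNReal.ofReal_mul (Real.rpow_nonneg (by positivity) _),
        show ∀ x y c : ℝ≥0∞, c⁻¹ * (x * (y * c)) = (x * y) * (c * c⁻¹) from
          fun x y c => by ring,
        ENNReal.mul_inv_cancel cne ENNReal.ofReal_ne_top, mul_one]
    · rw [Set.indicator_of_notMem hs]
      have : ∀ t : ℝ, Ψ s t = 0 := fun t => by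
        rw [hΨdef]; simp [Set.indicator_of_notMem hs]
      simp [this]
  have inner : ∀ t ∈ Ioi (0:ℝ), (∫⁻ s, ENNReal.ofReal (Ψ s t) ∂(volume : Measure (ι → ℝ)))
      = ENNReal.ofReal (t ^ (a-1) * Real.exp (-t) * ∏ i, iG (Dk i) t) := by
    intro t ht
    have htp : (0:ℝ) < t := ht
    have hCnn : 0 ≤ t ^ (σ-1) * Real.exp (-t) :=
      mul_nonneg (Real.rpow_nonneg htp.le _) (Real.exp_pos _).le
    have hfact : ∀ s : ι → ℝ, Ψ s t
        = (t ^ (σ-1) * Real.exp (-t)) * ∏ i, hF (Dk i) t (s i) := by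
      intro s
      by_cases hs : s ∈ S
      · rw [hΨdef]
        simp only
        rw [Set.indicator_of_mem hs]
        have hcoord : ∀ i, hF (Dk i) t (s i)
            = Real.exp (-(Dk i * s i) - t * Real.exp (-(s i))) := fun i =>
          Set.indicator_of_mem (hs i) _
        rw [show (∏ i, hF (Dk i) t (s i))
            = ∏ i, Real.exp (-(Dk i * s i) - t * Real.exp (-(s i))) from
          Finset.prod_congr rfl fun i _ => hcoord i, ← Real.exp_sum]
        have hsum : (∑ i, (-(Dk i * s i) - t * Real.exp (-(s i))))
            = (-∑ i, Dk i * s i) + (-(t * ∑ i, Real.exp (-(s i)))) := by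
          rw [Finset.sum_sub_distrib, ← Finset.sum_neg_distrib, ← Finset.mul_sum]
          ring
        rw [hsum, Real.exp_add,
          show -((1 + ∑ i, Real.exp (-s i)) * t)
            = (-t) + (-(t * ∑ i, Real.exp (-s i))) by ring, Real.exp_add]
        ring
      · rw [hΨdef]
        simp only
        rw [Set.indicator_of_notMem hs, zero_mul]
        obtain ⟨i, hi⟩ := not_forall.mp hs
        rw [Finset.prod_eq_zero (Finset.mem_univ i) (Set.indicator_of_notMem hi _), mul_zero]
    calc ∫⁻ s, ENNReal.ofReal (Ψ s t) ∂(volume : Measure (ι → ℝ))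
        = ∫⁻ s, ENNReal.ofReal (t ^ (σ-1) * Real.exp (-t)) *
            ENNReal.ofReal (∏ i, hF (Dk i) t (s i)) ∂(volume : Measure (ι → ℝ)) := by
          apply lintegral_congr
          intro s
          rw [hfact s, ENNReal.ofReal_mul hCnn]
      _ = ENNReal.ofReal (t ^ (σ-1) * Real.exp (-t)) *
            ∫⁻ s, ENNReal.ofReal (∏ i, hF (Dk i) t (s i)) ∂(volume : Measure (ι → ℝ)) :=
          lintegral_const_mul' _ _ ENNReal.ofReal_ne_top
      _ = ENNReal.ofReal (t ^ (σ-1) * Real.exp (-t)) *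
            ENNReal.ofReal (∫ s : ι → ℝ, ∏ i, hF (Dk i) t (s i)) := by
          rw [ofReal_integral_eq_lintegral_ofReal
            (show Integrable _ (volume : Measure (ι → ℝ)) from
              Integrable.fintype_prod fun i => hF_int (hDk i) htp.le)
            (ae_of_all _ fun s => Finset.prod_nonneg fun i _ => hF_nonneg _ _ _)]
      _ = ENNReal.ofReal (t ^ (σ-1) * Real.exp (-t)) *
            ENNReal.ofReal (∏ i, ∫ x, hF (Dk i) t x) := by
          rw [← integral_fintype_prod_eq_prod (fun i => hF (Dk i) t)]; rfl
      _ = ENNReal.ofReal (t ^ (a-1) * Real.exp (-t) * ∏ i, iG (Dk i) t) := by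
          rw [← ENNReal.ofReal_mul hCnn]
          congr 1
          have h1 : ∀ i, iG (Dk i) t = t ^ (Dk i) * ∫ x, hF (Dk i) t x := fun i => by
            rw [hF_integral]; exact iG_eq (hDk i) htp
          rw [show (∏ i, iG (Dk i) t) = ∏ i, (t ^ (Dk i) * ∫ x, hF (Dk i) t x) from
            Finset.prod_congr rfl fun i _ => h1 i, Finset.prod_mul_distrib,
            ← Real.rpow_sum_of_pos htp,
            show σ - 1 = (a-1) + ∑ i, Dk i by rw [hσ]; ring, Real.rpow_add htp]
          ring
  have hterm := term_int ha Finset.univ Dk (fun i _ => hDk i)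
  have hJnn : 0 ≤ ∫ t in Ioi (0:ℝ), t ^ (a-1) * Real.exp (-t) * ∏ i, iG (Dk i) t :=
    setIntegral_nonneg measurableSet_Ioi fun t ht =>
      mul_nonneg (mul_nonneg (Real.rpow_nonneg (le_of_lt ht) _) (Real.exp_pos _).le)
        (Finset.prod_nonneg fun i _ => iG_nonneg (le_of_lt ht))
  calc ∫ s in S, F s
      = (∫⁻ s, ENNReal.ofReal (S.indicator F s) ∂(volume : Measure (ι → ℝ))).toReal := by
        rw [← integral_indicator hS]
        exact integral_eq_lintegral_of_nonneg_ae
          (ae_of_all _ fun s => Set.indicator_nonneg (fun y _ => hF0 y) s)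
          ((hFc.measurable.indicator hS).aestronglyMeasurable)
    _ = ((ENNReal.ofReal (Real.Gamma σ))⁻¹ *
          ∫⁻ t in Ioi 0, ∫⁻ s, ENNReal.ofReal (Ψ s t) ∂(volume : Measure (ι → ℝ))).toReal := by
        rw [lintegral_congr ptw, lintegral_const_mul' _ _ cnetop,
          lintegral_lintegral_swap (hΨmeas.ennreal_ofReal.aemeasurable)]
    _ = ((ENNReal.ofReal (Real.Gamma σ))⁻¹ *
          ENNReal.ofReal (∫ t in Ioi (0:ℝ),
            t ^ (a-1) * Real.exp (-t) * ∏ i, iG (Dk i) t)).toReal := by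
        rw [setLIntegral_congr_fun measurableSet_Ioi inner,
          ofReal_integral_eq_lintegral_ofReal hterm ?_]
        filter_upwards [ae_restrict_mem measurableSet_Ioi] with x hx
        exact mul_nonneg (mul_nonneg (Real.rpow_nonneg (le_of_lt hx) _) (Real.exp_pos _).le)
          (Finset.prod_nonneg fun i _ => iG_nonneg (le_of_lt hx))
    _ = (Real.Gamma σ)⁻¹ *
          ∫ t in Ioi (0:ℝ), t ^ (a-1) * Real.exp (-t) * ∏ i, iG (Dk i) t := by
        rw [ENNReal.toReal_mul, ENNReal.toReal_inv, ENNReal.toReal_ofReal hΓ.le,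
          ENNReal.toReal_ofReal hJnn]

theorem stmt13 (m : ℕ) (hm : 2 ≤ m) (D : Fin m → ℝ) (hD : ∀ j, 0 < D j) :
    (∑ q : Fin m,
      ∫ s in {s : {i : Fin m // i ≠ q} → ℝ | ∀ i, 0 ≤ s i},
        Real.exp (-∑ i, D i.1 * s i) *
          (1 + ∑ i, Real.exp (-s i)) ^ (-(∑ j, D j)))
      = (∏ j, Real.Gamma (D j)) / Real.Gamma (∑ j, D j) := by
  have hm0 : 0 < m := by omega
  have hsplit : ∀ q : Fin m, (∑ j, D j) = D q + ∑ i : {i : Fin m // i ≠ q}, D i.1 := by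
    intro q
    rw [show (∑ i : {i : Fin m // i ≠ q}, D i.1) = ∑ j ∈ Finset.univ.erase q, D j from
      (Finset.sum_subtype _ (fun x => by simp) _).symm,
      Finset.add_sum_erase _ _ (Finset.mem_univ q)]
  have key : ∀ q : Fin m,
      (∫ s in {s : {i : Fin m // i ≠ q} → ℝ | ∀ i, 0 ≤ s i},
        Real.exp (-∑ i, D i.1 * s i) *
          (1 + ∑ i, Real.exp (-s i)) ^ (-(∑ j, D j)))
      = (Real.Gamma (∑ j, D j))⁻¹ *
        ∫ t in Ioi (0:ℝ), t ^ (D q - 1) * Real.exp (-t) *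
          ∏ j ∈ Finset.univ.erase q, iG (D j) t := by
    intro q
    have h0 := keyQ (fun i : {i : Fin m // i ≠ q} => D i.1) (fun i => hD i.1)
      (D q) (hD q) (∑ j, D j) (hsplit q)
    rw [h0]
    congr 1
    refine setIntegral_congr_fun measurableSet_Ioi fun t _ => ?_
    congr 1
    exact (Finset.prod_subtype (Finset.univ.erase q)
      (fun x => by simp [Finset.mem_erase]) (fun a => iG (D a) t)).symm
  rw [Finset.sum_congr rfl (fun q _ => key q), ← Finset.mul_sum]
  have hterm : ∀ q : Fin m, IntegrableOn
      (fun t => t ^ (D q - 1) * Real.exp (-t) * ∏ j ∈ Finset.univ.erase q, iG (D j) t)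
      (Ioi 0) := fun q => term_int (hD q) _ _ (fun j _ => hD j)
  rw [← integral_finset_sum _ fun q _ => hterm q]
  set P := fun u : ℝ => ∏ j, iG (D j) u with hP
  have hderiv : ∀ u ∈ Ioi (0:ℝ), HasDerivAt P
      (∑ q, (∏ j ∈ Finset.univ.erase q, iG (D j) u) • (u ^ (D q - 1) * Real.exp (-u))) u :=
    fun u hu => HasDerivAt.fun_finset_prod (fun q _ => iG_hasDeriv (hD q) hu)
  have hcont : ContinuousWithinAt P (Ici 0) 0 :=
    tendsto_finset_prod _ (fun j _ => iG_contWithin (hD j))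
  have htend : Tendsto P atTop (𝓝 (∏ j, Real.Gamma (D j))) :=
    tendsto_finset_prod _ (fun j _ => iG_tendsto (hD j))
  have hP0 : P 0 = 0 :=
    Finset.prod_eq_zero (Finset.mem_univ (⟨0, hm0⟩ : Fin m)) (iG_zero _)
  have hint' : IntegrableOn (fun u => ∑ q,
      (∏ j ∈ Finset.univ.erase q, iG (D j) u) • (u ^ (D q - 1) * Real.exp (-u))) (Ioi 0) := by
    apply integrable_finset_sum
    intro q _
    refine (hterm q).congr_fun (fun u _ => by rw [smul_eq_mul]; ring) measurableSet_Ioi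
  have hFTC := integral_Ioi_of_hasDerivAt_of_tendsto hcont hderiv hint' htend
  rw [show (∫ t in Ioi (0:ℝ), ∑ q, t ^ (D q - 1) * Real.exp (-t) *
        ∏ j ∈ Finset.univ.erase q, iG (D j) t)
      = ∫ u in Ioi (0:ℝ), ∑ q,
        (∏ j ∈ Finset.univ.erase q, iG (D j) u) • (u ^ (D q - 1) * Real.exp (-u)) from
    setIntegral_congr_fun measurableSet_Ioi fun u _ => Finset.sum_congr rfl fun q _ => by
      rw [smul_eq_mul]; ring, hFTC, hP0, sub_zero, inv_mul_eq_div]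
end
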